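/- arXiv:1112.1313 — 4 statements merged into one kernel-verified Lean document; each statement's English description precedes it below -/
import Mathlib

section
/- For any permutation π of {1,…,n} with n ≥ 4, the minimum size of a target set that activates all vertices of the cycle permutation graph P_π(C_n) under constant threshold 2 is ⌈(n+1)/2⌉. -/
/-- Activation closure: `v` eventually becomes active when starting from seed set `S`
in graph `G` with thresholds `θ` (a vertex activates once at least `θ v` of its
neighbors are active). -/
inductive Activated {V : Type*} (G : SimpleGraph V) (θ : V → ℕ) (S : Set V) : V → Prop
  | base {v : V} : v ∈ S → Activated G θ S v
  | step {v : V} (T : Finset V) (hadj : ∀ u ∈ T, G.Adj u v) (hcard : θ v ≤ T.card)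
      (hact : ∀ u ∈ T, Activated G θ S u) : Activated G θ S v

/-- Minimum size of a target set whose activation closure is all of `V`. -/
noncomputable def minSeed {V : Type*} [Fintype V] (G : SimpleGraph V) (θ : V → ℕ) : ℕ :=
  sInf {k | ∃ S : Finset V, S.card = k ∧ ∀ v, Activated G θ (↑S) v}

/-- The cycle permutation graph `P_π(C_n)`: two disjoint copies of the `n`-cycle
(`(false, i)` are the `v_i`, `(true, i)` are the `u_i`) together with the
matching edges `v_i u_{π(i)}`. -/
def cyclePermGraph (n : ℕ) [NeZero n] (π : Equiv.Perm (ZMod n)) :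
    SimpleGraph (Bool × ZMod n) :=
  SimpleGraph.fromRel (fun a b =>
    (a.1 = b.1 ∧ b.2 = a.2 + 1) ∨
    (a.1 = false ∧ b.1 = true ∧ b.2 = π a.2))


open scoped Classical
section
variable (n : ℕ) [NeZero n] (π : Equiv.Perm (ZMod n))

omit [NeZero n] in
lemma one_ne (hn : 4 ≤ n) : (1 : ZMod n) ≠ 0 := by
  have : ((1:ℕ) : ZMod n) ≠ 0 := by
    rw [Ne, ZMod.natCast_eq_zero_iff]
    exact fun h => by have := Nat.le_of_dvd one_pos h; omega
  simpa using this

omit [NeZero n] in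
lemma two_ne (hn : 4 ≤ n) : (2 : ZMod n) ≠ 0 := by
  have : ((2:ℕ) : ZMod n) ≠ 0 := by
    rw [Ne, ZMod.natCast_eq_zero_iff]
    exact fun h => by have := Nat.le_of_dvd two_pos h; omega
  simpa using this

lemma adj_cycle (hn : 4 ≤ n) (b : Bool) (i : ZMod n) :
    (cyclePermGraph n π).Adj (b, i) (b, i + 1) := by
  refine ⟨?_, Or.inl (Or.inl ⟨rfl, rfl⟩)⟩
  simp only [ne_eq, Prod.mk.injEq, not_and, true_implies]
  intro h
  exact one_ne n hn (by linear_combination -h)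

lemma adj_match (i : ZMod n) :
    (cyclePermGraph n π).Adj (false, i) (true, π i) := by
  exact ⟨by simp, Or.inl (Or.inr ⟨rfl, rfl, rfl⟩)⟩

open Finset in
lemma nbr_false (hn : 4 ≤ n) (i : ZMod n) :
    (cyclePermGraph n π).neighborFinset (false, i) =
      {(false, i + 1), (false, i - 1), (true, π i)} := by
  have h1 := one_ne n hn
  ext ⟨b, j⟩
  rw [SimpleGraph.mem_neighborFinset]
  simp only [SimpleGraph.mem_neighborFinset, cyclePermGraph, SimpleGraph.fromRel_adj,
    mem_insert, mem_singleton, Prod.mk.injEq, ne_eq]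
  cases b <;> simp
  constructor
  · rintro ⟨hne, h | h⟩
    · exact Or.inl h
    · exact Or.inr (by linear_combination -h)
  · rintro (h | h)
    · exact ⟨fun hij => h1 (by rw [h] at hij; linear_combination -hij),
        Or.inl h⟩
    · exact ⟨fun hij => h1 (by rw [h] at hij; linear_combination hij),
        Or.inr (by linear_combination -h)⟩

open Finset in
lemma nbr_true (hn : 4 ≤ n) (j : ZMod n) :
    (cyclePermGraph n π).neighborFinset (true, j) =
      {(true, j + 1), (true, j - 1), (false, π.symm j)} := by
  have h1 := one_ne n hn
  ext ⟨b, i⟩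
  rw [SimpleGraph.mem_neighborFinset]
  simp only [SimpleGraph.mem_neighborFinset, cyclePermGraph, SimpleGraph.fromRel_adj,
    mem_insert, mem_singleton, Prod.mk.injEq, ne_eq]
  cases b <;> simp
  · rw [Equiv.eq_symm_apply]; exact eq_comm
  · constructor
    · rintro ⟨hne, h | h⟩
      · exact Or.inl h
      · exact Or.inr (by linear_combination -h)
    · rintro (h | h)
      · exact ⟨fun hij => h1 (by rw [h] at hij; linear_combination -hij),
          Or.inl h⟩
      · exact ⟨fun hij => h1 (by rw [h] at hij; linear_combination hij),
          Or.inr (by linear_combination -h)⟩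

lemma degree_eq (hn : 4 ≤ n) (v : Bool × ZMod n) :
    (cyclePermGraph n π).degree v = 3 := by
  have h1 := one_ne n hn
  have h2 := two_ne n hn
  have key : ∀ i : ZMod n, i + 1 ≠ i - 1 := fun i h => h2 (by linear_combination h)
  obtain ⟨b, i⟩ := v
  rw [SimpleGraph.degree]
  cases b
  · rw [nbr_false n π hn]
    rw [Finset.card_insert_of_notMem (by simp [key i]), Finset.card_insert_of_notMem (by simp),
      Finset.card_singleton]
  · rw [nbr_true n π hn]
    rw [Finset.card_insert_of_notMem (by simp [key i]), Finset.card_insert_of_notMem (by simp),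
      Finset.card_singleton]
end

section upper
variable (n : ℕ) [NeZero n] (π : Equiv.Perm (ZMod n))

lemma step2 {V : Type*} {G : SimpleGraph V} {θ : V → ℕ} {S : Set V} {x y v : V}
    (hθ : θ v ≤ 2) (hxy : x ≠ y) (hx : G.Adj x v) (hy : G.Adj y v)
    (hAx : Activated G θ S x) (hAy : Activated G θ S y) : Activated G θ S v := by
  classical
  refine Activated.step {x, y} ?_ ?_ ?_
  · intro u hu
    rcases Finset.mem_insert.mp hu with rfl | hu
    · exact hx
    · rw [Finset.mem_singleton] at hu; subst hu; exact hy
  · rw [Finset.card_insert_of_notMem (by simpa using hxy), Finset.card_singleton]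
    exact hθ
  · intro u hu
    rcases Finset.mem_insert.mp hu with rfl | hu
    · exact hAx
    · rw [Finset.mem_singleton] at hu; subst hu; exact hAy

/-- The seed set: `(false, 2k)` for `k < n/2`, plus `(true, π (-1))`. -/
def seedSet : Finset (Bool × ZMod n) :=
  ((Finset.range (n / 2)).image fun k => ((false, ((2 * k : ℕ) : ZMod n)) : Bool × ZMod n)) ∪
    {(true, π (-1))}

lemma seedSet_card (hn : 4 ≤ n) : (seedSet n π).card = n / 2 + 1 := by
  rw [seedSet, Finset.card_union_of_disjoint, Finset.card_singleton,
    Finset.card_image_of_injOn, Finset.card_range]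
  · intro k hk l hl hkl
    simp only [Finset.mem_coe, Finset.mem_range] at hk hl
    have h1 : 2 * k < n := by omega
    have h2 : 2 * l < n := by omega
    have := congrArg Prod.snd hkl
    simp only at this
    have := congrArg ZMod.val this
    rwa [ZMod.val_cast_of_lt h1, ZMod.val_cast_of_lt h2, Nat.mul_left_cancel_iff] at this
    omega
  · simp [Finset.disjoint_left]

lemma neg_one_cast (hn : 4 ≤ n) : ((n - 1 : ℕ) : ZMod n) = -1 := by
  have h1 : (1:ℕ) ≤ n := by omega
  rw [Nat.cast_sub h1, ZMod.natCast_self, Nat.cast_one, zero_sub]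


variable {n : ℕ} [NeZero n] {π : Equiv.Perm (ZMod n)}

lemma seed_activated (hn : 4 ≤ n) {v : Bool × ZMod n} (hv : v ∈ seedSet n π) :
    Activated (cyclePermGraph n π) (fun _ => 2) (↑(seedSet n π)) v :=
  Activated.base (Finset.mem_coe.mpr hv)

lemma perc_false (hn : 4 ≤ n) (z : ZMod n) :
    Activated (cyclePermGraph n π) (fun _ => 2) (↑(seedSet n π)) (false, z) := by
  set G := cyclePermGraph n π with hG
  set A := Activated G (fun _ => 2) (↑(seedSet n π) : Set (Bool × ZMod n)) with hA
  have h1 := one_ne n hn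
  have h2 := two_ne n hn
  have hbaseE : ∀ k : ℕ, k < n / 2 → A (false, ((2 * k : ℕ) : ZMod n)) := by
    intro k hk
    exact seed_activated hn (Finset.mem_union_left _
      (Finset.mem_image.mpr ⟨k, Finset.mem_range.mpr hk, rfl⟩))
  have hbaseT : A (true, π (-1)) :=
    seed_activated hn (Finset.mem_union_right _ (Finset.mem_singleton_self _))
  have hneg1 : A (false, -1) := by
    refine step2 le_rfl (x := ((false, 0) : Bool × ZMod n)) (y := (true, π (-1)))
      (by simp) ?_ ?_ ?_ hbaseT
    · have := adj_cycle n π hn false (-1)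
      rw [neg_add_cancel] at this
      exact this.symm
    · exact (adj_match n π (-1)).symm
    · have := hbaseE 0 (by omega)
      simpa using this
  have hE : ∀ k : ℕ, 2 * k < n → A (false, ((2 * k : ℕ) : ZMod n)) := by
    intro k hk
    by_cases hk2 : k < n / 2
    · exact hbaseE k hk2
    · have h2k : 2 * k = n - 1 := by omega
      rw [h2k, neg_one_cast n hn]
      exact hneg1
  have hO : ∀ k : ℕ, 2 * k + 1 < n → A (false, ((2 * k + 1 : ℕ) : ZMod n)) := by
    intro k hk
    have hx : A (false, ((2 * k : ℕ) : ZMod n)) := hE k (by omega)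
    have hy : A (false, ((2 * k + 2 : ℕ) : ZMod n)) := by
      by_cases hk2 : 2 * k + 2 < n
      · have := hE (k + 1) (by omega)
        rwa [show 2 * (k + 1) = 2 * k + 2 by ring] at this
      · have hkn : 2 * k + 2 = n := by omega
        have := hE 0 (by omega)
        rw [hkn, ZMod.natCast_self]
        simpa using this
    have hcast1 : ((2 * k + 1 : ℕ) : ZMod n) = ((2 * k : ℕ) : ZMod n) + 1 := by push_cast; ring
    have hcast2 : ((2 * k + 2 : ℕ) : ZMod n) = ((2 * k + 1 : ℕ) : ZMod n) + 1 := by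
      push_cast; ring
    refine step2 le_rfl (x := ((false, ((2 * k : ℕ) : ZMod n)) : Bool × ZMod n))
      (y := (false, ((2 * k + 2 : ℕ) : ZMod n))) ?_ ?_ ?_ hx hy
    · simp only [ne_eq, Prod.mk.injEq, true_and]
      intro hc
      apply h2
      rw [hcast2, hcast1] at hc
      linear_combination -hc
    · have := adj_cycle n π hn false ((2 * k : ℕ) : ZMod n)
      rwa [← hcast1] at this
    · have := adj_cycle n π hn false ((2 * k + 1 : ℕ) : ZMod n)
      rw [← hcast2] at this
      exact this.symm
  have hz : z = ((z.val : ℕ) : ZMod n) := by rw [ZMod.natCast_val, ZMod.cast_id]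
  rw [hz]
  rcases Nat.even_or_odd z.val with ⟨k, hk⟩ | ⟨k, hk⟩
  · have := hE k (by have := ZMod.val_lt z; omega)
    rwa [show 2 * k = z.val by omega] at this
  · have := hO k (by have := ZMod.val_lt z; omega)
    rwa [show 2 * k + 1 = z.val by omega] at this

lemma perc_all (hn : 4 ≤ n) (v : Bool × ZMod n) :
    Activated (cyclePermGraph n π) (fun _ => 2) (↑(seedSet n π)) v := by
  set A := Activated (cyclePermGraph n π) (fun _ => 2)
    (↑(seedSet n π) : Set (Bool × ZMod n)) with hA
  have htrue : ∀ k : ℕ, A (true, π (-1) + (k : ZMod n)) := by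
    intro k
    induction k with
    | zero =>
      simpa using seed_activated hn (Finset.mem_union_right _ (Finset.mem_singleton_self _))
    | succ k ih =>
      have hcast : ((k + 1 : ℕ) : ZMod n) = ((k : ℕ) : ZMod n) + 1 := by push_cast; ring
      have hadjx : (cyclePermGraph n π).Adj (true, π (-1) + (k : ZMod n))
          (true, π (-1) + ((k + 1 : ℕ) : ZMod n)) := by
        have := adj_cycle n π hn true (π (-1) + (k : ZMod n))
        rwa [hcast, ← add_assoc]
      have hadjy : (cyclePermGraph n π).Adj
          (false, π.symm (π (-1) + ((k + 1 : ℕ) : ZMod n)))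
          (true, π (-1) + ((k + 1 : ℕ) : ZMod n)) := by
        have := adj_match n π (π.symm (π (-1) + ((k + 1 : ℕ) : ZMod n)))
        rwa [Equiv.apply_symm_apply] at this
      exact step2 le_rfl (by simp) hadjx hadjy ih (perc_false hn _)
  obtain ⟨b, z⟩ := v
  cases b
  · exact perc_false hn z
  · have hz : π (-1) + (((z - π (-1)).val : ℕ) : ZMod n) = z := by
      rw [ZMod.natCast_val, ZMod.cast_id]; ring
    have := htrue (z - π (-1)).val
    rwa [hz] at this


section lowerMachinery
open Finset

section
variable {V : Type*} [Fintype V] [DecidableEq V] (G : SimpleGraph V) [DecidableRel G.Adj]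
  (θ : V → ℕ) (S : Finset V)

def activeAt : ℕ → Finset V
  | 0 => S
  | (k+1) => activeAt k ∪ univ.filter (fun v => θ v ≤ (G.neighborFinset v ∩ activeAt k).card)

lemma activeAt_mono {k l : ℕ} (h : k ≤ l) : activeAt G θ S k ⊆ activeAt G θ S l := by
  induction l with
  | zero => simp_all
  | succ l ih =>
    rcases Nat.eq_or_lt_of_le h with rfl | h'
    · rfl
    · exact (ih (Nat.lt_succ_iff.mp h')).trans subset_union_left

lemma activated_mem_activeAt {v : V} (h : Activated G θ (↑S) v) :
    ∃ k, v ∈ activeAt G θ S k := by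
  induction h with
  | base hv => exact ⟨0, hv⟩
  | step T hadj hcard hact ih =>
    choose! f hf using ih
    refine ⟨T.sup f + 1, ?_⟩
    rw [activeAt]
    refine mem_union_right _ (mem_filter.mpr ⟨mem_univ _, le_trans hcard (card_le_card ?_)⟩)
    intro u hu
    exact mem_inter.mpr ⟨SimpleGraph.mem_neighborFinset _ _ _ |>.mpr (hadj u hu).symm,
      activeAt_mono G θ S (le_sup hu) (hf u hu)⟩

/-- Generic lower bound for threshold-2 activation on a graph. -/
lemma lower_bound (hdeg : ∀ v, G.degree v = 3)
    (h : ∀ v, Activated G (fun _ => 2) (↑S) v) (hS : Sᶜ.Nonempty) :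
    2 * Sᶜ.card + 1 ≤ G.edgeFinset.card := by
  classical
  have hgen : ∀ v : V, ∃ k, v ∈ activeAt G (fun _ => 2) S k :=
    fun v => activated_mem_activeAt G _ S (h v)
  set C := Fintype.card V with hC
  obtain ⟨gen, hgen_spec, hgen_min⟩ :
      ∃ gen : V → ℕ, (∀ v, v ∈ activeAt G (fun _ => 2) S (gen v)) ∧
        (∀ v k, v ∈ activeAt G (fun _ => 2) S k → gen v ≤ k) :=
    ⟨fun v => Nat.find (hgen v), fun v => Nat.find_spec (hgen v),
      fun v k hk => Nat.find_le hk⟩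
  set key : V → ℕ := fun v => gen v * C + ((Fintype.equivFin V) v : ℕ) with hkeydef
  have hCpos : 0 < C := Fintype.card_pos_iff.mpr ⟨hS.choose⟩
  have hfin : ∀ v : V, ((Fintype.equivFin V) v : ℕ) < C := fun v => (Fintype.equivFin V v).2
  have keylt : ∀ {u v : V}, gen u < gen v → key u < key v := by
    intro u v huv
    calc key u < gen u * C + C := by
          exact Nat.add_lt_add_left (hfin u) _
      _ = (gen u + 1) * C := by ring
      _ ≤ gen v * C := Nat.mul_le_mul_right C huv
      _ ≤ key v := Nat.le_add_right _ _
  have keyinj : Function.Injective key := by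
    intro u v huv
    have hg : gen u = gen v := by
      rcases lt_trichotomy (gen u) (gen v) with h' | h' | h'
      · exact absurd huv (Nat.ne_of_lt (keylt h'))
      · exact h'
      · exact absurd huv.symm (Nat.ne_of_lt (keylt h'))
    have : ((Fintype.equivFin V) u : ℕ) = ((Fintype.equivFin V) v : ℕ) := by
      simp only [hkeydef, hg] at huv; omega
    exact (Fintype.equivFin V).injective (Fin.val_injective this)
  have hgenS : ∀ v ∈ S, gen v = 0 :=
    fun v hv => Nat.le_zero.mp (hgen_min v 0 hv)
  have hgen_pos : ∀ v ∉ S, 0 < gen v := by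
    intro v hv
    rcases Nat.eq_zero_or_pos (gen v) with h' | h'
    · have := hgen_spec v
      rw [h'] at this
      exact absurd this hv
    · exact h'
  set P : V → Finset V := fun v =>
    G.neighborFinset v ∩ univ.filter (fun u => key u < key v) with hPdef
  -- claim A
  have claimA : ∀ v ∉ S, 2 ≤ (P v).card := by
    intro v hv
    obtain ⟨m, hm⟩ : ∃ m, gen v = m + 1 := ⟨gen v - 1, by have := hgen_pos v hv; omega⟩
    have hv1 : v ∈ activeAt G (fun _ => 2) S (m + 1) := hm ▸ hgen_spec v
    have hv0 : v ∉ activeAt G (fun _ => 2) S m :=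
      fun hmem => by have := hgen_min v m hmem; omega
    rw [activeAt] at hv1
    rcases mem_union.mp hv1 with h' | h'
    · exact absurd h' hv0
    · have hc := (mem_filter.mp h').2
      refine le_trans hc (card_le_card ?_)
      intro u hu
      rcases mem_inter.mp hu with ⟨hu1, hu2⟩
      refine mem_inter.mpr ⟨hu1, mem_filter.mpr ⟨mem_univ _, keylt ?_⟩⟩
      have : gen u ≤ m := hgen_min u m hu2
      omega
  -- sum over the complement is at most the number of edges
  have hsum_le : ∑ v ∈ Sᶜ, (P v).card ≤ G.edgeFinset.card := by
    rw [← card_sigma]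
    apply card_le_card_of_injOn (fun a => s(a.1, a.2))
    · rintro ⟨v, u⟩ ha
      rw [Finset.mem_coe, mem_sigma] at ha
      have := mem_inter.mp ha.2
      rw [Finset.mem_coe, SimpleGraph.mem_edgeFinset, SimpleGraph.mem_edgeSet]
      exact (SimpleGraph.mem_neighborFinset _ _ _).mp this.1
    · rintro ⟨v, u⟩ ha ⟨v', u'⟩ hb hab
      rw [Finset.mem_coe, mem_sigma] at ha hb
      have hu : key u < key v := (mem_filter.mp (mem_inter.mp ha.2).2).2
      have hu' : key u' < key v' := (mem_filter.mp (mem_inter.mp hb.2).2).2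
      simp only [Sym2.eq, Sym2.rel_iff', Prod.mk.injEq, Prod.swap_prod_mk] at hab
      rcases hab with ⟨rfl, rfl⟩ | ⟨rfl, rfl⟩
      · rfl
      · omega
  obtain ⟨vmax, hvmaxmem, hvmax⟩ := Finset.exists_max_image Sᶜ key hS
  have hvS : vmax ∉ S := mem_compl.mp hvmaxmem
  have hPmax : P vmax = G.neighborFinset vmax := by
    refine inter_eq_left.mpr ?_
    intro u hu
    simp only [mem_filter, mem_univ, true_and]
    by_cases huS : u ∈ S
    · refine keylt ?_
      have h0 := hgenS u huS
      have h1 := hgen_pos vmax hvS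
      omega
    · have hne : u ≠ vmax := by
        rintro rfl
        exact G.irrefl ((SimpleGraph.mem_neighborFinset _ _ _).mp hu)
      have hle := hvmax u (mem_compl.mpr huS)
      rcases lt_or_eq_of_le hle with h' | h'
      · exact h'
      · exact absurd (keyinj h') hne
  have hsum_ge : 2 * Sᶜ.card + 1 ≤ ∑ v ∈ Sᶜ, (P v).card := by
    rw [← Finset.add_sum_erase _ _ hvmaxmem]
    have h3 : (P vmax).card = 3 := by rw [hPmax]; exact hdeg vmax
    have h2 : ∀ v ∈ Sᶜ.erase vmax, 2 ≤ (P v).card :=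
      fun v hv => claimA v (mem_compl.mp (mem_of_mem_erase hv))
    have hb := Finset.card_nsmul_le_sum (Sᶜ.erase vmax) (fun v => (P v).card) 2 h2
    simp only [smul_eq_mul] at hb
    have hcarde : (Sᶜ.erase vmax).card = Sᶜ.card - 1 := card_erase_of_mem hvmaxmem
    have hpos : 1 ≤ Sᶜ.card := card_pos.mpr hS
    rw [hcarde] at hb
    omega
  exact le_trans hsum_ge hsum_le

end


/-- For any permutation `π` and `n ≥ 4`, `min-seed(P_π(C_n), 2) = ⌈(n+1)/2⌉`. -/
theorem minSeed_cyclePermGraph (n : ℕ) [NeZero n] (hn : 4 ≤ n)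
    (π : Equiv.Perm (ZMod n)) :
    minSeed (cyclePermGraph n π) (fun _ => 2) = (n + 2) / 2 := by
  have hdeg : ∀ v, (cyclePermGraph n π).degree v = 3 := degree_eq n π hn
  have hcardV : Fintype.card (Bool × ZMod n) = 2 * n := by
    rw [Fintype.card_prod, Fintype.card_bool, ZMod.card]
  have hE2 : 2 * (cyclePermGraph n π).edgeFinset.card = 3 * (2 * n) := by
    have h := SimpleGraph.sum_degrees_eq_twice_card_edges (cyclePermGraph n π)
    rw [Finset.sum_congr rfl (fun v _ => hdeg v), Finset.sum_const, Finset.card_univ,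
      hcardV, smul_eq_mul] at h
    omega
  apply le_antisymm
  · apply Nat.sInf_le
    exact ⟨seedSet n π, by rw [seedSet_card n π hn]; omega, perc_all hn⟩
  · refine le_csInf ⟨n / 2 + 1, seedSet n π, seedSet_card n π hn, perc_all hn⟩ ?_
    rintro k ⟨S, rfl, hS⟩
    by_cases hc : Sᶜ.Nonempty
    · have hlb := lower_bound (cyclePermGraph n π) S hdeg hS hc
      have hcc : Sᶜ.card = 2 * n - S.card := by rw [Finset.card_compl, hcardV]
      have hle : S.card ≤ 2 * n := hcardV ▸ Finset.card_le_univ S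
      omega
    · have hu : S = Finset.univ := by
        rwa [Finset.not_nonempty_iff_eq_empty, Finset.compl_eq_empty_iff] at hc
      rw [hu, Finset.card_univ, hcardV]
      omega
end lowerMachinery
end upper
end

section
/- For the n-path P_n with constant threshold 2, there is a minimum target set S activating all of P_n with |S| = ⌈(n+1)/2⌉ which contains both endpoints of the path. -/
/-- The `n`-path with vertices `x_1, …, x_n` (as `Fin n`) and edges `x_i x_{i+1}`. -/
def pathGraph (n : ℕ) : SimpleGraph (Fin n) :=
  SimpleGraph.fromRel (fun a b => (b : ℕ) = (a : ℕ) + 1)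

lemma path_adj_iff {n : ℕ} {a b : Fin n} :
    (pathGraph n).Adj a b ↔ (a:ℕ) ≠ (b:ℕ) ∧ ((b:ℕ) = (a:ℕ)+1 ∨ (a:ℕ) = (b:ℕ)+1) := by
  rw [pathGraph, SimpleGraph.fromRel_adj]
  simp [Fin.ext_iff]

lemma activated_closed {V : Type*} (G : SimpleGraph V) (θ : V → ℕ) (S : Set V) (A : Set V)
    (hS : ∀ v ∈ S, v ∈ A)
    (hcl : ∀ w, ∀ T : Finset V, (∀ u ∈ T, G.Adj u w) → θ w ≤ T.card → (∀ u ∈ T, u ∈ A) → w ∈ A)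
    {v : V} (h : Activated G θ S v) : v ∈ A := by
  induction h with
  | base h => exact hS _ h
  | step T hadj hcard hact ih => exact hcl _ T hadj hcard ih

lemma path_block {n : ℕ} (T : Finset (Fin n)) (B : Set ℕ)
    (hB : ∀ v : Fin n, v ∈ T → (v:ℕ) ∉ B)
    (hblock : ∀ w u u' : Fin n, (w:ℕ) ∈ B → (pathGraph n).Adj u w → (pathGraph n).Adj u' w →
       (u:ℕ) ∉ B → (u':ℕ) ∉ B → u = u')
    (hall : ∀ v, Activated (pathGraph n) (fun _ => 2) (↑T) v) (v : Fin n) :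
    (v:ℕ) ∉ B := by
  refine activated_closed (pathGraph n) (fun _ => 2) (↑T) {v | (v:ℕ) ∉ B} ?_ ?_ (hall v)
  · exact fun v hv => hB v hv
  · intro w T' hadj hcard hmem
    simp only [Set.mem_setOf_eq]
    intro hwB
    have h2 : 2 ≤ T'.card := hcard
    obtain ⟨u, hu, u', hu', hne⟩ := Finset.one_lt_card.mp (show 1 < T'.card by omega)
    exact hne (hblock w u u' hwB (hadj u hu) (hadj u' hu') (hmem u hu) (hmem u' hu'))

lemma hits_zero {n : ℕ} (hn : 1 ≤ n) (T : Finset (Fin n))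
    (hall : ∀ v, Activated (pathGraph n) (fun _ => 2) (↑T) v) :
    (⟨0, Nat.lt_of_lt_of_le Nat.zero_lt_one hn⟩ : Fin n) ∈ T := by
  by_contra h
  refine path_block T {m | m = 0} ?_ ?_ hall ⟨0, Nat.lt_of_lt_of_le Nat.zero_lt_one hn⟩ rfl
  · intro v hv hv0
    exact h (by rwa [show (⟨0, Nat.lt_of_lt_of_le Nat.zero_lt_one hn⟩ : Fin n) = v from (Fin.ext hv0.symm)])
  · intro w u u' hw hadj hadj' hu hu'
    rw [path_adj_iff] at hadj hadj'
    simp only [Set.mem_setOf_eq] at hw hu hu'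
    exact Fin.ext (by omega)

lemma hits_last {n : ℕ} (hn : 1 ≤ n) (T : Finset (Fin n))
    (hall : ∀ v, Activated (pathGraph n) (fun _ => 2) (↑T) v) :
    (⟨n-1, Nat.sub_lt (Nat.lt_of_lt_of_le Nat.zero_lt_one hn) Nat.zero_lt_one⟩ : Fin n) ∈ T := by
  by_contra h
  refine path_block T {m | m = n-1} ?_ ?_ hall ⟨n-1, Nat.sub_lt (Nat.lt_of_lt_of_le Nat.zero_lt_one hn) Nat.zero_lt_one⟩ rfl
  · intro v hv hv0
    exact h (by rwa [show (⟨n-1, Nat.sub_lt (Nat.lt_of_lt_of_le Nat.zero_lt_one hn) Nat.zero_lt_one⟩ : Fin n) = v from (Fin.ext hv0.symm)])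
  · intro w u u' hw hadj hadj' hu hu'
    rw [path_adj_iff] at hadj hadj'
    simp only [Set.mem_setOf_eq] at hw hu hu'
    have h1 := u.isLt
    have h2 := u'.isLt
    have h3 := w.isLt
    exact Fin.ext (by omega)

lemma hits_pair {n : ℕ} (T : Finset (Fin n))
    (hall : ∀ v, Activated (pathGraph n) (fun _ => 2) (↑T) v)
    (i : ℕ) (hi : i + 1 < n) :
    (⟨i, by omega⟩ : Fin n) ∈ T ∨ (⟨i+1, by omega⟩ : Fin n) ∈ T := by
  by_contra h
  push_neg at h
  obtain ⟨h1, h2⟩ := h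
  refine path_block T {m | m = i ∨ m = i+1} ?_ ?_ hall ⟨i, by omega⟩ (Or.inl rfl)
  · rintro v hv (hv0 | hv0)
    · exact h1 (by rwa [show (⟨i, by omega⟩ : Fin n) = v from (Fin.ext hv0.symm)])
    · exact h2 (by rwa [show (⟨i+1, by omega⟩ : Fin n) = v from (Fin.ext hv0.symm)])
  · intro w u u' hw hadj hadj' hu hu'
    rw [path_adj_iff] at hadj hadj'
    simp only [Set.mem_setOf_eq] at hw hu hu'
    exact Fin.ext (by omega)

lemma count_lb {n : ℕ} (hn : 1 ≤ n) (Tn : Finset ℕ)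
    (h0 : 0 ∈ Tn) (hl : n - 1 ∈ Tn) (hp : ∀ i, i + 1 < n → i ∈ Tn ∨ i + 1 ∈ Tn) :
    n + 1 ≤ 2 * Tn.card := by
  set D := (Finset.range n).filter (fun j => j + 1 ∈ Tn) with hD
  have hsub : Finset.range n ⊆ Tn ∪ D := by
    intro j hj
    rw [Finset.mem_range] at hj
    rcases lt_or_ge (j+1) n with h | h
    · rcases hp j h with h' | h'
      · exact Finset.mem_union_left _ h'
      · exact Finset.mem_union_right _ (Finset.mem_filter.mpr ⟨Finset.mem_range.mpr hj, h'⟩)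
    · have : j = n - 1 := by omega
      exact Finset.mem_union_left _ (this ▸ hl)
  have hc1 : n ≤ Tn.card + D.card := by
    calc n = (Finset.range n).card := (Finset.card_range n).symm
    _ ≤ (Tn ∪ D).card := Finset.card_le_card hsub
    _ ≤ Tn.card + D.card := Finset.card_union_le _ _
  have himg : D.image (· + 1) ⊆ Tn.erase 0 := by
    intro m hm
    simp only [Finset.mem_image, hD, Finset.mem_filter, Finset.mem_range] at hm
    obtain ⟨j, ⟨_, hj2⟩, rfl⟩ := hm
    exact Finset.mem_erase.mpr ⟨by omega, hj2⟩
  have hDcard : D.card ≤ Tn.card - 1 := by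
    calc D.card = (D.image (· + 1)).card :=
          (Finset.card_image_of_injective _ (add_left_injective 1)).symm
    _ ≤ (Tn.erase 0).card := Finset.card_le_card himg
    _ = Tn.card - 1 := Finset.card_erase_of_mem h0
  have hpos : 1 ≤ Tn.card := Finset.card_pos.mpr ⟨0, h0⟩
  omega

lemma evens_card (n : ℕ) :
    ((Finset.range n).filter (fun v => v % 2 = 0)).card = (n + 1) / 2 := by
  induction n with
  | zero => simp
  | succ k ih =>
    rw [Finset.range_add_one, Finset.filter_insert]
    split
    · rw [Finset.card_insert_of_notMem (by simp), ih]
      omega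
    · rw [ih]
      rename_i hk
      omega

lemma Sn_card (n : ℕ) (hn : 1 ≤ n) :
    ((Finset.range n).filter (fun v => v % 2 = 0 ∨ v = n - 1)).card = (n + 2) / 2 := by
  rcases Nat.mod_two_eq_zero_or_one n with he | he
  · have heq : (Finset.range n).filter (fun v => v % 2 = 0 ∨ v = n - 1)
        = insert (n - 1) ((Finset.range n).filter (fun v => v % 2 = 0)) := by
      ext v
      simp only [Finset.mem_filter, Finset.mem_insert, Finset.mem_range]
      omega
    rw [heq, Finset.card_insert_of_notMem (by simp only [Finset.mem_filter, Finset.mem_range]; omega),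
      evens_card]
    omega
  · have heq : (Finset.range n).filter (fun v => v % 2 = 0 ∨ v = n - 1)
        = (Finset.range n).filter (fun v => v % 2 = 0) := by
      refine Finset.filter_congr ?_
      intro v hv
      rw [Finset.mem_range] at hv
      omega
    rw [heq, evens_card]
    omega

lemma image_S (n : ℕ) :
    ((Finset.univ.filter (fun v : Fin n => (v:ℕ) % 2 = 0 ∨ (v:ℕ) = n - 1)).image Fin.val)
      = (Finset.range n).filter (fun v => v % 2 = 0 ∨ v = n - 1) := by
  ext m
  simp only [Finset.mem_image, Finset.mem_filter, Finset.mem_univ, true_and, Finset.mem_range]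
  constructor
  · rintro ⟨v, hp, rfl⟩
    exact ⟨v.isLt, hp⟩
  · rintro ⟨hm, hp⟩
    exact ⟨⟨m, hm⟩, hp, rfl⟩


/-- For the `n`-path with constant threshold `2`, there is a minimum target set of size
`⌈(n+1)/2⌉` activating all of `P_n` and containing both endpoints of the path. -/
theorem pathGraph_min_target_set (n : ℕ) (hn : 1 ≤ n) :
    ∃ S : Finset (Fin n),
      S.card = (n + 2) / 2 ∧
      (∀ v, Activated (pathGraph n) (fun _ => 2) (↑S) v) ∧
      (∀ T : Finset (Fin n), (∀ v, Activated (pathGraph n) (fun _ => 2) (↑T) v) →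
        S.card ≤ T.card) ∧
      (⟨0, by omega⟩ : Fin n) ∈ S ∧ (⟨n - 1, by omega⟩ : Fin n) ∈ S := by
  set S := Finset.univ.filter (fun v : Fin n => (v:ℕ) % 2 = 0 ∨ (v:ℕ) = n - 1) with hSdef
  have hScard : S.card = (n + 2) / 2 := by
    rw [← Finset.card_image_of_injective S Fin.val_injective, hSdef, image_S, Sn_card n hn]
  refine ⟨S, hScard, ?_, ?_, ?_, ?_⟩
  · intro v
    by_cases hv : v ∈ S
    · exact Activated.base (Finset.mem_coe.mpr hv)
    · simp only [hSdef, Finset.mem_filter, Finset.mem_univ, true_and] at hv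
      push_neg at hv
      obtain ⟨hodd, hne⟩ := hv
      have hvlt := v.isLt
      have h1 : 1 ≤ (v:ℕ) := by omega
      have h2 : (v:ℕ) + 1 < n := by omega
      set u1 : Fin n := ⟨(v:ℕ) - 1, by omega⟩ with hu1
      set u2 : Fin n := ⟨(v:ℕ) + 1, by omega⟩ with hu2
      have hne12 : u1 ≠ u2 := by
        simp only [hu1, hu2, ne_eq, Fin.ext_iff]
        omega
      refine Activated.step {u1, u2} ?_ ?_ ?_
      · intro u hu
        rw [Finset.mem_insert, Finset.mem_singleton] at hu
        rcases hu with rfl | rfl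
        · rw [path_adj_iff]
          refine ⟨by simp only [hu1]; omega, Or.inl (by simp only [hu1]; try omega)⟩
        · rw [path_adj_iff]
          refine ⟨by simp only [hu2]; omega, Or.inr (by simp only [hu2]; try omega)⟩
      · have hc : ({u1, u2} : Finset (Fin n)).card = 2 := Finset.card_pair hne12
        exact le_of_eq hc.symm
      · intro u hu
        rw [Finset.mem_insert, Finset.mem_singleton] at hu
        refine Activated.base (Finset.mem_coe.mpr ?_)
        rcases hu with rfl | rfl
        · simp only [hSdef, Finset.mem_filter, Finset.mem_univ, true_and, hu1]
          left; omega
        · simp only [hSdef, Finset.mem_filter, Finset.mem_univ, true_and, hu2]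
          left; omega
  · intro T hall
    have h0 := hits_zero hn T hall
    have hl := hits_last hn T hall
    have key := count_lb hn (T.image Fin.val)
      (Finset.mem_image.mpr ⟨⟨0, by omega⟩, h0, rfl⟩)
      (Finset.mem_image.mpr ⟨⟨n - 1, by omega⟩, hl, rfl⟩)
      (by
        intro i hi
        rcases hits_pair T hall i hi with h | h
        · exact Or.inl (Finset.mem_image.mpr ⟨⟨i, by omega⟩, h, rfl⟩)
        · exact Or.inr (Finset.mem_image.mpr ⟨⟨i + 1, by omega⟩, h, rfl⟩))
    rw [Finset.card_image_of_injective _ Fin.val_injective] at key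
    omega
  · simp [hSdef]
  · simp [hSdef]
end

section
/- If gcd(m,s) = 1, then min-seed(P(m,s),2) = ⌈(m+1)/2⌉, as a consequence of the fact that P(m,s) is then a cycle permutation graph. -/
/-- The generalized Petersen graph `P(m,s)`: outer cycle vertices `v_i = (false, i)`,
inner vertices `u_i = (true, i)`, edges `v_i v_{i+1}`, `u_i v_i`, `u_i u_{i+s}`
(indices mod `m`). -/
def genPetersen (m s : ℕ) [NeZero m] : SimpleGraph (Bool × ZMod m) :=
  SimpleGraph.fromRel (fun a b =>
    (a.1 = false ∧ b.1 = false ∧ b.2 = a.2 + 1) ∨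
    (a.1 = true ∧ b.1 = false ∧ b.2 = a.2) ∨
    (a.1 = true ∧ b.1 = true ∧ b.2 = a.2 + (s : ZMod m)))

namespace BootAux

variable {V : Type*} (G : SimpleGraph V) (θ : V → ℕ) (S : Set V)

def stage : ℕ → Set V
  | 0 => S
  | n+1 => stage n ∪ {v | ∃ T : Finset V, (∀ u ∈ T, G.Adj u v) ∧ θ v ≤ T.card ∧ ∀ u ∈ T, u ∈ stage n}

lemma stage_mono : ∀ {a b : ℕ}, a ≤ b → stage G θ S a ⊆ stage G θ S b := by
  intro a b h
  induction b with
  | zero => rw [Nat.le_zero.mp h]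
  | succ b ih =>
    rcases Nat.lt_or_ge a (b+1) with h' | h'
    · exact (ih (Nat.lt_succ_iff.mp h')).trans Set.subset_union_left
    · rw [le_antisymm h h']

lemma uniform (T : Finset V) (h : ∀ u ∈ T, ∃ n, u ∈ stage G θ S n) :
    ∃ N, ∀ u ∈ T, u ∈ stage G θ S N := by
  classical
  induction T using Finset.induction_on with
  | empty => exact ⟨0, by simp⟩
  | @insert x t hx iht =>
    obtain ⟨N1, hN1⟩ := iht (fun u hu => h u (Finset.mem_insert_of_mem hu))
    obtain ⟨N2, hN2⟩ := h x (Finset.mem_insert_self _ _)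
    refine ⟨max N1 N2, fun u hu => ?_⟩
    rcases Finset.mem_insert.mp hu with rfl | hu
    · exact stage_mono G θ S (le_max_right _ _) hN2
    · exact stage_mono G θ S (le_max_left _ _) (hN1 u hu)

lemma exists_stage {v : V} (h : Activated G θ S v) : ∃ n, v ∈ stage G θ S n := by
  induction h with
  | base hv => exact ⟨0, hv⟩
  | @step v T hadj hcard hact ih =>
    obtain ⟨N, hN⟩ := uniform G θ S T ih
    exact ⟨N + 1, Or.inr ⟨T, hadj, hcard, hN⟩⟩

lemma time_exists (hperc : ∀ v, Activated G θ S v) :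
    ∃ time : V → ℕ, (∀ v ∈ S, time v = 0) ∧
      (∀ v, v ∉ S → ∃ T : Finset V, θ v ≤ T.card ∧ ∀ u ∈ T, G.Adj u v ∧ time u < time v) := by
  classical
  have ex : ∀ v, ∃ n, v ∈ stage G θ S n := fun v => exists_stage G θ S (hperc v)
  refine ⟨fun v => Nat.find (ex v), fun v hv => Nat.find_eq_zero (ex v) |>.mpr hv, ?_⟩
  intro v hv
  have h0 : Nat.find (ex v) ≠ 0 := fun h => hv ((Nat.find_eq_zero (ex v)).mp h)
  obtain ⟨k, hk⟩ : ∃ k, Nat.find (ex v) = k + 1 := ⟨Nat.find (ex v) - 1, by omega⟩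
  have hv1 : v ∈ stage G θ S (k + 1) := hk ▸ Nat.find_spec (ex v)
  rcases hv1 with hv1 | ⟨T, hadj, hcard, hst⟩
  · have : Nat.find (ex v) ≤ k := Nat.find_le hv1
    omega
  · refine ⟨T, hcard, fun u hu => ⟨hadj u hu, ?_⟩⟩
    show Nat.find (ex u) < Nat.find (ex v)
    have : Nat.find (ex u) ≤ k := Nat.find_le (hst u hu)
    omega

end BootAux
namespace BootAux

lemma key_exists {V : Type*} [Fintype V] (time : V → ℕ) :
    ∃ key : V → ℕ, Function.Injective key ∧ ∀ u v, time u < time v → key u < key v := by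
  classical
  obtain ⟨e⟩ := Fintype.truncEquivFin V |>.nonempty
  set n0 := Fintype.card V with hn0
  refine ⟨fun v => time v * (n0 + 1) + (e v).val, ?_, ?_⟩
  · intro u v huv
    have huv' : time u * (n0 + 1) + (e u).val = time v * (n0 + 1) + (e v).val := huv
    have hu : ((e u).val : ℕ) < n0 := (e u).isLt
    have hv : ((e v).val : ℕ) < n0 := (e v).isLt
    have h1 : time u = time v := by
      rcases Nat.lt_trichotomy (time u) (time v) with h | h | h
      · nlinarith
      · exact h
      · nlinarith
    rw [h1] at huv'
    have h2 : (e u).val = (e v).val := by omega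
    exact e.injective (Fin.val_injective h2)
  · intro u v h
    have hu : ((e u).val : ℕ) < n0 := (e u).isLt
    have hv : ((e v).val : ℕ) < n0 := (e v).isLt
    nlinarith

lemma lower_bound {V : Type*} [Fintype V] (G : SimpleGraph V) [DecidableRel G.Adj] (S : Finset V)
    (hperc : ∀ v, Activated G (fun _ => 2) (↑S) v)
    (hdeg : ∀ v : V, (Finset.univ.filter (fun u => G.Adj u v)).card = 3)
    (hne : ∃ v, v ∉ S) :
    Fintype.card V + 2 ≤ 4 * S.card := by
  classical
  obtain ⟨time, htS, htstep⟩ := time_exists G (fun _ => 2) (↑S) hperc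
  obtain ⟨key, hkinj, hkmono⟩ := key_exists time
  -- time ≥ 1 off S
  have htpos : ∀ v, v ∉ S → 1 ≤ time v := by
    intro v hv
    obtain ⟨T, hcard, hT⟩ := htstep v hv
    obtain ⟨u, hu⟩ := Finset.card_pos.mp (by omega : 0 < T.card)
    have := (hT u hu).2
    omega
  set B : V → Finset V := fun v => Finset.univ.filter (fun u => G.Adj u v ∧ key u < key v) with hB
  -- max vertex
  obtain ⟨w, hw⟩ := hne
  obtain ⟨vm, -, hvm⟩ := Finset.exists_max_image Finset.univ key ⟨w, Finset.mem_univ w⟩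
  have hvmS : vm ∉ S := by
    intro hmem
    have h1 : time vm = 0 := htS vm hmem
    have h2 : key vm < key w := hkmono _ _ (by have := htpos w hw; omega)
    exact absurd (hvm w (Finset.mem_univ w)) (by omega)
  -- lower bounds on B
  have hB2 : ∀ v, v ∉ S → 2 ≤ (B v).card := by
    intro v hv
    obtain ⟨T, hcard, hT⟩ := htstep v hv
    refine le_trans hcard (Finset.card_le_card ?_)
    intro u hu
    simp only [hB, Finset.mem_filter, Finset.mem_univ, true_and]
    exact ⟨(hT u hu).1, hkmono _ _ (hT u hu).2⟩
  have hB3 : 3 ≤ (B vm).card := by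
    rw [show B vm = Finset.univ.filter (fun u => G.Adj u vm) from ?_]
    · exact (hdeg vm).ge
    ext u
    simp only [hB, Finset.mem_filter, Finset.mem_univ, true_and, and_iff_left_iff_imp]
    intro hadj
    have hne' : key u ≠ key vm := fun h => hadj.ne (hkinj h)
    have := hvm u (Finset.mem_univ u)
    omega
  -- sum lower bound
  have hSlt : S ⊂ Finset.univ := Finset.ssubset_univ_iff.mpr (fun h => hw (h ▸ Finset.mem_univ w))
  have hsum_lower : 2 * (Fintype.card V - S.card - 1) + 3 ≤ ∑ v, (B v).card := by
    have hU : vm ∈ Finset.univ \ S := Finset.mem_sdiff.mpr ⟨Finset.mem_univ vm, hvmS⟩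
    calc 2 * (Fintype.card V - S.card - 1) + 3
        = 3 + ∑ _v ∈ (Finset.univ \ S).erase vm, 2 := by
          rw [Finset.sum_const, smul_eq_mul, Finset.card_erase_of_mem hU,
            Finset.card_sdiff_of_subset (Finset.subset_univ S), Finset.card_univ]
          omega
      _ ≤ (B vm).card + ∑ v ∈ (Finset.univ \ S).erase vm, (B v).card :=
          Nat.add_le_add hB3 (Finset.sum_le_sum (fun v hv =>
            hB2 v (Finset.mem_sdiff.mp (Finset.mem_of_mem_erase hv)).2))
      _ = ∑ v ∈ Finset.univ \ S, (B v).card := Finset.add_sum_erase _ (fun v => (B v).card) hU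
      _ ≤ ∑ v, (B v).card := Finset.sum_le_sum_of_subset (Finset.subset_univ _)
  -- sum upper bound
  have hsum_upper : 2 * ∑ v, (B v).card = 3 * Fintype.card V := by
    have hswap : ∑ v, (B v).card
        = ∑ v, (Finset.univ.filter (fun u => G.Adj v u ∧ key v < key u)).card := by
      simp only [hB, Finset.card_filter]
      rw [Finset.sum_comm]
    have hpart : ∀ v, (B v).card
        + (Finset.univ.filter (fun u => G.Adj v u ∧ key v < key u)).card = 3 := by
      intro v
      rw [← hdeg v]
      have h1 : B v = (Finset.univ.filter (fun u => G.Adj u v)).filter (fun u => key u < key v) := by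
        simp [hB, Finset.filter_filter]
      have h2 : Finset.univ.filter (fun u => G.Adj v u ∧ key v < key u)
          = (Finset.univ.filter (fun u => G.Adj u v)).filter (fun u => ¬ key u < key v) := by
        rw [Finset.filter_filter]
        apply Finset.filter_congr
        intro u _
        constructor
        · rintro ⟨h, hlt⟩; exact ⟨h.symm, by omega⟩
        · rintro ⟨h, hlt⟩
          have : key u ≠ key v := fun hh => h.ne (hkinj hh)
          exact ⟨h.symm, by omega⟩
      rw [h1, h2, Finset.card_filter_add_card_filter_not]
    calc 2 * ∑ v, (B v).card
        = ∑ v, (B v).card + ∑ v, (Finset.univ.filter (fun u => G.Adj v u ∧ key v < key u)).card := by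
          rw [← hswap]; ring
      _ = ∑ v : V, 3 := by rw [← Finset.sum_add_distrib]; exact Finset.sum_congr rfl (fun v _ => hpart v)
      _ = 3 * Fintype.card V := by rw [Finset.sum_const, Finset.card_univ, smul_eq_mul, mul_comm]
  have hcard : S.card < Fintype.card V := Finset.card_lt_card hSlt
  omega

end BootAux


section GP
variable (m s : ℕ) [NeZero m]

lemma zmod_natCast_ne (a : ℕ) (h1 : 0 < a) (h2 : a < m) : (a : ZMod m) ≠ 0 := by
  intro h
  have := (ZMod.natCast_eq_zero_iff a m).mp h
  have := Nat.le_of_dvd h1 this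
  omega

lemma gp_one_ne (hm : 3 ≤ m) : (1 : ZMod m) ≠ 0 := by
  have := zmod_natCast_ne m 1 (by omega) (by omega)
  simpa using this

lemma gp_two_ne (hm : 3 ≤ m) : (2 : ZMod m) ≠ 0 := by
  have := zmod_natCast_ne m 2 (by omega) (by omega)
  simpa using this

lemma gp_adj_outer (hm : 3 ≤ m) (i : ZMod m) :
    (genPetersen m s).Adj (false, i) (false, i + 1) := by
  rw [genPetersen, SimpleGraph.fromRel_adj]
  refine ⟨?_, Or.inl (Or.inl ⟨rfl, rfl, rfl⟩)⟩
  simp only [ne_eq, Prod.mk.injEq, true_and]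
  intro h
  exact gp_one_ne m hm (by linear_combination -h)

lemma gp_adj_spoke (i : ZMod m) :
    (genPetersen m s).Adj (true, i) (false, i) := by
  rw [genPetersen, SimpleGraph.fromRel_adj]
  exact ⟨by simp, Or.inl (Or.inr (Or.inl ⟨rfl, rfl, rfl⟩))⟩

lemma gp_adj_inner (hs : (s : ZMod m) ≠ 0) (i : ZMod m) :
    (genPetersen m s).Adj (true, i) (true, i + s) := by
  rw [genPetersen, SimpleGraph.fromRel_adj]
  refine ⟨?_, Or.inl (Or.inr (Or.inr ⟨rfl, rfl, rfl⟩))⟩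
  simp only [ne_eq, Prod.mk.injEq, true_and]
  intro h
  exact hs (by linear_combination -h)

lemma gp_nbhd_false [DecidableRel (genPetersen m s).Adj] (hm : 3 ≤ m) (i : ZMod m) :
    Finset.univ.filter (fun u => (genPetersen m s).Adj u (false, i)) =
      {(false, i + 1), (false, i - 1), (true, i)} := by
  ext ⟨b, j⟩
  simp only [Finset.mem_filter, Finset.mem_univ, true_and, genPetersen,
    SimpleGraph.fromRel_adj, Finset.mem_insert, Finset.mem_singleton, Prod.mk.injEq,
    ne_eq]
  cases b
  · simp only [Bool.false_eq_true, false_and, and_false, false_or, or_false, true_and,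
      and_true]
    constructor
    · rintro ⟨hne, h | h⟩
      · exact Or.inr (by linear_combination -h)
      · exact Or.inl h
    · rintro (rfl | h)
      · refine ⟨fun h => gp_one_ne m hm (by linear_combination h), Or.inr rfl⟩
      · subst h
        refine ⟨fun h => gp_one_ne m hm (by linear_combination -h), Or.inl (by ring)⟩
  · simp [eq_comm]

lemma gp_nbhd_true [DecidableRel (genPetersen m s).Adj] (hs0 : (s : ZMod m) ≠ 0) (i : ZMod m) :
    Finset.univ.filter (fun u => (genPetersen m s).Adj u (true, i)) =
      {(false, i), (true, i + s), (true, i - s)} := by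
  ext ⟨b, j⟩
  simp only [Finset.mem_filter, Finset.mem_univ, true_and, genPetersen,
    SimpleGraph.fromRel_adj, Finset.mem_insert, Finset.mem_singleton, Prod.mk.injEq,
    ne_eq]
  cases b
  · simp [eq_comm]
  · simp only [Bool.true_eq_false, false_and, and_false, false_or, or_false, true_and,
      and_true]
    constructor
    · rintro ⟨hne, h | h⟩
      · exact Or.inr (by linear_combination -h)
      · exact Or.inl h
    · rintro (rfl | h)
      · exact ⟨fun h => hs0 (by linear_combination h), Or.inr rfl⟩
      · subst h
        exact ⟨fun h => hs0 (by linear_combination -h), Or.inl (by ring)⟩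

lemma gp_deg [DecidableRel (genPetersen m s).Adj] (hm : 3 ≤ m) (hs1 : 1 ≤ s)
    (hs2 : 2 * s ≤ m - 1) (v : Bool × ZMod m) :
    (Finset.univ.filter (fun u => (genPetersen m s).Adj u v)).card = 3 := by
  have hs0 : (s : ZMod m) ≠ 0 := zmod_natCast_ne m s (by omega) (by omega)
  have h2s : ((2 * s : ℕ) : ZMod m) ≠ 0 := zmod_natCast_ne m (2 * s) (by omega) (by omega)
  obtain ⟨b, i⟩ := v
  cases b
  · rw [gp_nbhd_false m s hm i]
    rw [Finset.card_insert_of_notMem, Finset.card_insert_of_notMem, Finset.card_singleton]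
    · simp only [Finset.mem_singleton, Prod.mk.injEq]
      rintro ⟨h, -⟩
      exact Bool.noConfusion h
    · simp only [Finset.mem_insert, Finset.mem_singleton, Prod.mk.injEq]
      rintro (⟨-, h⟩ | ⟨h, -⟩)
      · exact gp_two_ne m hm (by linear_combination h)
      · exact Bool.noConfusion h
  · rw [gp_nbhd_true m s hs0 i]
    rw [Finset.card_insert_of_notMem, Finset.card_insert_of_notMem, Finset.card_singleton]
    · simp only [Finset.mem_singleton, Prod.mk.injEq, true_and]
      intro h
      apply h2s
      push_cast
      linear_combination h
    · simp only [Finset.mem_insert, Finset.mem_singleton, Prod.mk.injEq]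
      rintro (⟨h, -⟩ | ⟨h, -⟩) <;> exact Bool.noConfusion h

end GP
/-- If `gcd(m,s) = 1` then `min-seed(P(m,s), 2) = ⌈(m+1)/2⌉`, as a consequence of the fact that
`P(m,s)` is then a cycle permutation graph. -/
theorem minSeed_genPetersen_coprime (m s : ℕ) [NeZero m] (hm : 3 ≤ m)
    (hs1 : 1 ≤ s) (hs2 : s ≤ (m - 1) / 2) (hgcd : Nat.gcd m s = 1) :
    minSeed (genPetersen m s) (fun _ => 2) = (m + 2) / 2 := by
  classical
  set G := genPetersen m s with hG
  have hs2' : 2 * s ≤ m - 1 := by omega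
  have hs0 : (s : ZMod m) ≠ 0 := zmod_natCast_ne m s (by omega) (by omega)
  set S0 : Finset (Bool × ZMod m) :=
    insert (true, (0 : ZMod m)) (((Finset.range m).filter (fun i => i % 2 = 1)).image
      (fun i : ℕ => ((false, (i : ZMod m)) : Bool × ZMod m))) with hS0
  -- cardinality of the seed
  have hoddcard : ((Finset.range m).filter (fun i => i % 2 = 1)).card = m / 2 := by
    have himg : (Finset.range m).filter (fun i => i % 2 = 1)
        = (Finset.range (m / 2)).image (fun k => 2 * k + 1) := by
      ext i
      simp only [Finset.mem_filter, Finset.mem_range, Finset.mem_image]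
      constructor
      · rintro ⟨h1, h2⟩; exact ⟨i / 2, by omega, by omega⟩
      · rintro ⟨k, hk, rfl⟩; omega
    rw [himg, Finset.card_image_of_injective _ (fun a b h => by omega), Finset.card_range]
  have hcard : S0.card = (m + 2) / 2 := by
    rw [hS0, Finset.card_insert_of_notMem, Finset.card_image_of_injOn, hoddcard]
    · omega
    · intro a ha b hb hab
      simp only [Finset.coe_filter, Finset.mem_range, Set.mem_setOf_eq] at ha hb
      have h1 : ((a : ZMod m)) = (b : ZMod m) := congrArg Prod.snd hab
      have := ZMod.val_cast_of_lt ha.1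
      have := ZMod.val_cast_of_lt hb.1
      rw [← this, ← ZMod.val_cast_of_lt ha.1, h1] at *
      omega
    · simp
  -- seed memberships
  have hmemv : ∀ i : ℕ, i < m → i % 2 = 1 →
      ((false, (i : ZMod m)) : Bool × ZMod m) ∈ (↑S0 : Set (Bool × ZMod m)) := by
    intro i h1 h2
    refine Finset.mem_coe.mpr ?_
    rw [hS0]
    refine Finset.mem_insert_of_mem (Finset.mem_image.mpr ⟨i, ?_, rfl⟩)
    simp [h1, h2]
  have hmemu0 : ((true, (0 : ZMod m)) : Bool × ZMod m) ∈ (↑S0 : Set (Bool × ZMod m)) := by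
    refine Finset.mem_coe.mpr ?_
    rw [hS0]
    exact Finset.mem_insert_self _ _
  -- percolation
  have act_v0 : Activated G (fun _ => 2) (↑S0) (false, (0 : ZMod m)) := by
    refine Activated.step {((false, (1 : ZMod m)) : Bool × ZMod m), (true, 0)} ?_ ?_ ?_
    · intro u hu
      rcases Finset.mem_insert.mp hu with rfl | hu
      · simpa using (gp_adj_outer m s hm 0).symm
      · rw [Finset.mem_singleton.mp hu]
        exact gp_adj_spoke m s 0
    · rw [Finset.card_insert_of_notMem (by simp), Finset.card_singleton]
    · intro u hu
      rcases Finset.mem_insert.mp hu with rfl | hu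
      · refine Activated.base ?_
        have := hmemv 1 (by omega) rfl
        simpa using this
      · rw [Finset.mem_singleton.mp hu]
        exact Activated.base hmemu0
  have act_v : ∀ i : ℕ, i < m → Activated G (fun _ => 2) (↑S0) (false, (i : ZMod m)) := by
    intro i hi
    rcases Nat.even_or_odd i with he | ho
    swap
    · exact Activated.base (hmemv i hi (Nat.odd_iff.mp ho))
    rcases Nat.eq_zero_or_pos i with rfl | hpos
    · simpa using act_v0
    obtain ⟨j, rfl⟩ : ∃ j, i = j + 1 := ⟨i - 1, by omega⟩
    have hjodd : j % 2 = 1 := by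
      rcases he with ⟨r, hr⟩; omega
    have hcast : ((j + 1 : ℕ) : ZMod m) = (j : ZMod m) + 1 := by push_cast; ring
    rw [hcast]
    refine Activated.step
      {((false, (j : ZMod m)) : Bool × ZMod m), (false, (j : ZMod m) + 1 + 1)} ?_ ?_ ?_
    · intro u hu
      rcases Finset.mem_insert.mp hu with rfl | hu
      · exact gp_adj_outer m s hm _
      · rw [Finset.mem_singleton.mp hu]
        exact (gp_adj_outer m s hm _).symm
    · rw [Finset.card_insert_of_notMem, Finset.card_singleton]
      simp only [Finset.mem_singleton, Prod.mk.injEq, true_and]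
      intro h
      exact gp_two_ne m hm (by linear_combination -h)
    · intro u hu
      rcases Finset.mem_insert.mp hu with rfl | hu
      · exact Activated.base (hmemv j (by omega) hjodd)
      · rw [Finset.mem_singleton.mp hu]
        rcases Nat.lt_or_ge (j + 2) m with h | h
        · have hc2 : ((j + 2 : ℕ) : ZMod m) = (j : ZMod m) + 1 + 1 := by push_cast; ring
          have := Activated.base (G := G) (θ := fun _ => 2)
            (hmemv (j + 2) h (by omega))
          rwa [hc2] at this
        · have hc2 : (j : ZMod m) + 1 + 1 = 0 := by
            have hjm : j + 2 = m := by omega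
            calc (j : ZMod m) + 1 + 1 = ((j + 2 : ℕ) : ZMod m) := by push_cast; ring
              _ = ((m : ℕ) : ZMod m) := by rw [hjm]
              _ = 0 := ZMod.natCast_self m
          rw [hc2]
          exact act_v0
  have act_vall : ∀ c : ZMod m, Activated G (fun _ => 2) (↑S0) (false, c) := by
    intro c
    have := act_v c.val (ZMod.val_lt c)
    rwa [ZMod.natCast_rightInverse c] at this
  have act_u : ∀ k : ℕ, Activated G (fun _ => 2) (↑S0) (true, ((k * s : ℕ) : ZMod m)) := by
    intro k
    induction k with
    | zero => simpa using Activated.base (G := G) (θ := fun _ => 2) hmemu0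
    | succ k ih =>
      have hcast : (((k + 1) * s : ℕ) : ZMod m) = ((k * s : ℕ) : ZMod m) + (s : ZMod m) := by
        push_cast; ring
      rw [hcast]
      refine Activated.step
        {((true, ((k * s : ℕ) : ZMod m)) : Bool × ZMod m),
         (false, ((k * s : ℕ) : ZMod m) + (s : ZMod m))} ?_ ?_ ?_
      · intro u hu
        rcases Finset.mem_insert.mp hu with rfl | hu
        · exact gp_adj_inner m s hs0 _
        · rw [Finset.mem_singleton.mp hu]
          exact (gp_adj_spoke m s _).symm
      · rw [Finset.card_insert_of_notMem (by simp), Finset.card_singleton]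
      · intro u hu
        rcases Finset.mem_insert.mp hu with rfl | hu
        · exact ih
        · rw [Finset.mem_singleton.mp hu]
          exact act_vall _
  have act_uall : ∀ c : ZMod m, Activated G (fun _ => 2) (↑S0) (true, c) := by
    intro c
    have hcop : Nat.Coprime s m := Nat.Coprime.symm hgcd
    have hunit : IsUnit (s : ZMod m) := (ZMod.isUnit_iff_coprime s m).mpr hcop
    obtain ⟨u, hu⟩ := hunit
    have key : (((c * ((u⁻¹ : (ZMod m)ˣ) : ZMod m)).val * s : ℕ) : ZMod m) = c := by
      rw [Nat.cast_mul, ZMod.natCast_rightInverse (c * ((u⁻¹ : (ZMod m)ˣ) : ZMod m)), ← hu,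
        mul_assoc, Units.inv_mul, mul_one]
    have := act_u (c * ((u⁻¹ : (ZMod m)ˣ) : ZMod m)).val
    rwa [key] at this
  have hperc : ∀ v, Activated G (fun _ => 2) (↑S0) v := by
    rintro ⟨b, c⟩
    cases b
    · exact act_vall c
    · exact act_uall c
  have hcV : Fintype.card (Bool × ZMod m) = 2 * m := by
    rw [Fintype.card_prod, Fintype.card_bool, ZMod.card]
  -- conclude
  apply le_antisymm
  · exact Nat.sInf_le ⟨S0, hcard, hperc⟩
  · refine le_csInf ⟨(m + 2) / 2, S0, hcard, hperc⟩ ?_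
    rintro k ⟨S, rfl, hp⟩
    by_cases hfull : ∃ v, v ∉ S
    · have hlow := BootAux.lower_bound G S hp (gp_deg m s hm hs1 hs2') hfull
      omega
    · push_neg at hfull
      have hsub : Finset.univ ⊆ S := fun v _ => hfull v
      have := Finset.card_le_card hsub
      rw [Finset.card_univ] at this
      omega
end

section
/- For every m ≥ 3, the minimum size of a target set activating all vertices of the torus cordalis C_m ⊘ C_3 under constant threshold 3 equals m + 1. -/
/-- The torus cordalis `C_m ⊘ C_n` on vertices `(i,j)`, `i : ZMod m`, `j : Fin n`
(`j` playing the role of `1,…,n`): edges `(i,j)(i±1,j)`, `(i,j)(i,j+1)` for `j < n`,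
and the shifted wrap-around edge `(i,n)(i+1,1)`. -/
def torusCordalis (m n : ℕ) [NeZero m] : SimpleGraph (ZMod m × Fin n) :=
  SimpleGraph.fromRel (fun a b =>
    (b.1 = a.1 + 1 ∧ b.2 = a.2) ∨
    (a.1 = b.1 ∧ (b.2 : ℕ) = (a.2 : ℕ) + 1) ∨
    ((a.2 : ℕ) = n - 1 ∧ (b.2 : ℕ) = 0 ∧ b.1 = a.1 + 1))

namespace TC

variable {m : ℕ} [NeZero m]

open scoped Classical

def f (m : ℕ) [NeZero m] (x : ℕ) : ZMod m × Fin 3 :=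
  (↑(x / 3), ⟨x % 3, Nat.mod_lt _ (by norm_num)⟩)

lemma f_eq_iff (x y : ℕ) : f m x = f m y ↔ x % (3 * m) = y % (3 * m) := by
  rw [Nat.mod_mul, Nat.mod_mul]
  simp only [f, Prod.ext_iff, Fin.mk.injEq, ZMod.natCast_eq_natCast_iff']
  constructor
  · rintro ⟨h1, h2⟩; omega
  · intro h
    have hx := Nat.mod_lt x (show 0 < 3 by norm_num)
    have hy := Nat.mod_lt y (show 0 < 3 by norm_num)
    omega

lemma f_inj_lt {x y : ℕ} (hx : x < 3 * m) (hy : y < 3 * m) (h : f m x = f m y) : x = y := by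
  rw [f_eq_iff, Nat.mod_eq_of_lt hx, Nat.mod_eq_of_lt hy] at h; exact h

lemma f_mod (x : ℕ) : f m (x % (3 * m)) = f m x := by
  rw [f_eq_iff, Nat.mod_mod_of_dvd _ dvd_rfl]

lemma f_add_cancel {x c c' : ℕ} (hc : c < 3 * m) (hc' : c' < 3 * m)
    (h : f m (x + c) = f m (x + c')) : c = c' := by
  rw [f_eq_iff] at h
  have h2 : Nat.ModEq (3 * m) c c' := Nat.ModEq.add_left_cancel' x h
  rwa [Nat.ModEq, Nat.mod_eq_of_lt hc, Nat.mod_eq_of_lt hc'] at h2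

lemma f_ne_add {x c c' : ℕ} (hc : c < 3 * m) (hc' : c' < 3 * m) (h : c ≠ c') :
    f m (x + c) ≠ f m (x + c') := fun he => h (f_add_cancel hc hc' he)

lemma f_ne {c c' : ℕ} (hc : c < 3 * m) (hc' : c' < 3 * m) (h : c ≠ c') :
    f m c ≠ f m c' := by
  have := f_ne_add (x := 0) hc hc' h
  simpa using this

lemma fst_f (x : ℕ) : (f m x).1 = ↑(x / 3) := rfl
lemma snd_f (x : ℕ) : ((f m x).2 : ℕ) = x % 3 := rfl

lemma adj_succ (hm : 3 ≤ m) (x : ℕ) : (torusCordalis m 3).Adj (f m x) (f m (x + 1)) := by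
  have hN : (9:ℕ) ≤ 3 * m := by omega
  rw [torusCordalis, SimpleGraph.fromRel_adj]
  refine ⟨by simpa using f_ne_add (m := m) (x := x) (c := 0) (c' := 1) (by omega) (by omega) (by omega), Or.inl ?_⟩
  have h3 : x % 3 = 0 ∨ x % 3 = 1 ∨ x % 3 = 2 := by omega
  rcases h3 with h | h | h
  · refine Or.inr (Or.inl ⟨?_, ?_⟩)
    · rw [fst_f, fst_f, show (x+1)/3 = x/3 from by omega]
    · rw [snd_f, snd_f]; omega
  · refine Or.inr (Or.inl ⟨?_, ?_⟩)
    · rw [fst_f, fst_f, show (x+1)/3 = x/3 from by omega]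
    · rw [snd_f, snd_f]; omega
  · refine Or.inr (Or.inr ⟨?_, ?_, ?_⟩)
    · rw [snd_f]; omega
    · rw [snd_f]; omega
    · rw [fst_f, fst_f, show (x+1)/3 = x/3 + 1 from by omega, Nat.cast_add, Nat.cast_one]

lemma adj3 (hm : 3 ≤ m) (x : ℕ) : (torusCordalis m 3).Adj (f m x) (f m (x + 3)) := by
  rw [torusCordalis, SimpleGraph.fromRel_adj]
  refine ⟨by simpa using f_ne_add (m := m) (x := x) (c := 0) (c' := 3) (by omega) (by omega) (by omega), Or.inl (Or.inl ⟨?_, ?_⟩)⟩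
  · rw [fst_f, fst_f, show (x+3)/3 = x/3 + 1 from by omega, Nat.cast_add, Nat.cast_one]
  · apply Fin.ext; rw [snd_f, snd_f]; omega

lemma f_surj (v : ZMod m × Fin 3) : ∃ x, x < 3 * m ∧ f m x = v := by
  refine ⟨3 * v.1.val + v.2.val, ?_, ?_⟩
  · have h1 : v.1.val < m := ZMod.val_lt v.1
    have h2 : v.2.val < 3 := v.2.isLt
    omega
  · have h2 : v.2.val < 3 := v.2.isLt
    refine Prod.ext ?_ (Fin.ext ?_)
    · rw [fst_f, show (3 * v.1.val + v.2.val) / 3 = v.1.val from by omega]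
      exact ZMod.natCast_rightInverse v.1
    · rw [snd_f]; omega

lemma f_period (x : ℕ) : f m (x + 3 * m) = f m x := by
  rw [f_eq_iff, Nat.add_mod_right]

lemma neighbor_eq (hm : 3 ≤ m) (x : ℕ) (w : ZMod m × Fin 3)
    (h : (torusCordalis m 3).Adj (f m x) w) :
    w = f m (x + 1) ∨ w = f m (x + 3) ∨ w = f m (x + (3 * m - 1)) ∨ w = f m (x + (3 * m - 3)) := by
  have hm1 : (1:ℕ) ≤ m := by omega
  have hw2 : (w.2 : ℕ) < 3 := w.2.isLt
  have hcast : ∀ a b : ℕ, ((a : ZMod m) = b ↔ a % m = b % m) := fun a b =>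
    ZMod.natCast_eq_natCast_iff' a b m
  have hsub : ((x / 3 + m - 1 : ℕ) : ZMod m) = (↑(x / 3) : ZMod m) - 1 := by
    refine eq_sub_of_add_eq ?_
    have h9 : ((x / 3 + m - 1 : ℕ) : ZMod m) + ((1 : ℕ) : ZMod m) = ((x / 3 + m : ℕ) : ZMod m) := by
      rw [← Nat.cast_add, show x / 3 + m - 1 + 1 = x / 3 + m from by omega]
    rw [Nat.cast_one] at h9
    rw [h9, Nat.cast_add, ZMod.natCast_self, add_zero]
  rw [torusCordalis, SimpleGraph.fromRel_adj] at h
  obtain ⟨hne, hrel⟩ := h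
  rcases hrel with (⟨h1, h2⟩ | ⟨h1, h2⟩ | ⟨h1, h2, h3⟩) | (⟨h1, h2⟩ | ⟨h1, h2⟩ | ⟨h1, h2, h3⟩)
  · -- w.1 = a.1 + 1, w.2 = a.2 : w = f (x+3)
    refine Or.inr (Or.inl (Prod.ext ?_ ?_))
    · rw [h1, fst_f, fst_f, show (x+3)/3 = x/3 + 1 from by omega, Nat.cast_add, Nat.cast_one]
    · rw [h2]; apply Fin.ext; rw [snd_f, snd_f]; omega
  · -- a.1 = w.1, (w.2) = a.2 + 1 : w = f (x+1), with x % 3 ≤ 1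
    rw [snd_f] at h2
    have hx3 : x % 3 ≤ 1 := by omega
    refine Or.inl (Prod.ext ?_ (Fin.ext ?_))
    · rw [← h1, fst_f, fst_f, show (x+1)/3 = x/3 from by omega]
    · rw [h2, snd_f]; omega
  · -- a.2 = 2, w.2 = 0, w.1 = a.1 + 1 : w = f (x+1)
    rw [snd_f] at h1
    refine Or.inl (Prod.ext ?_ (Fin.ext ?_))
    · rw [h3, fst_f, fst_f, show (x+1)/3 = x/3 + 1 from by omega, Nat.cast_add, Nat.cast_one]
    · rw [h2, snd_f]; omega
  · -- a.1 = w.1 + 1, a.2 = w.2 : w = f (x + (3m-3))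
    refine Or.inr (Or.inr (Or.inr (Prod.ext ?_ ?_)))
    · rw [fst_f, show (x + (3*m-3))/3 = x/3 + m - 1 from by omega, hsub]
      rw [fst_f] at h1
      exact eq_sub_of_add_eq h1.symm
    · rw [← h2]; apply Fin.ext; rw [snd_f, snd_f]; omega
  · -- w.1 = a.1, a.2 = w.2 + 1 : w = f (x + (3m-1)), x % 3 ≥ 1
    rw [snd_f] at h2
    have hx3 : 1 ≤ x % 3 := by omega
    refine Or.inr (Or.inr (Or.inl (Prod.ext ?_ (Fin.ext ?_))))
    · rw [h1, fst_f, fst_f, show (x + (3*m-1))/3 = x/3 + m from by omega, Nat.cast_add,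
        ZMod.natCast_self, add_zero]
    · rw [snd_f]; omega
  · -- w.2 = 2, a.2 = 0, a.1 = w.1 + 1 : w = f (x + (3m-1)), x % 3 = 0
    rw [snd_f] at h2
    refine Or.inr (Or.inr (Or.inl (Prod.ext ?_ (Fin.ext ?_))))
    · rw [fst_f, show (x + (3*m-1))/3 = x/3 + m - 1 from by omega, hsub]
      rw [fst_f] at h3
      exact eq_sub_of_add_eq h3.symm
    · rw [snd_f, h1]; omega

lemma neighborFinset_eq (hm : 3 ≤ m) (x : ℕ) :
    (torusCordalis m 3).neighborFinset (f m x) =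
      {f m (x + 1), f m (x + 3), f m (x + (3 * m - 1)), f m (x + (3 * m - 3))} := by
  ext w
  rw [SimpleGraph.mem_neighborFinset]
  constructor
  · intro h
    have := neighbor_eq hm x w h
    simp only [Finset.mem_insert, Finset.mem_singleton]
    tauto
  · intro h
    simp only [Finset.mem_insert, Finset.mem_singleton] at h
    rcases h with h | h | h | h <;> subst h
    · exact adj_succ hm x
    · exact adj3 hm x
    · have h1 := adj_succ hm (x + (3 * m - 1))
      rw [show x + (3 * m - 1) + 1 = x + 3 * m from by omega, f_period] at h1
      exact h1.symm
    · have h1 := adj3 hm (x + (3 * m - 3))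
      rw [show x + (3 * m - 3) + 3 = x + 3 * m from by omega, f_period] at h1
      exact h1.symm

lemma degree_eq (hm : 3 ≤ m) (v : ZMod m × Fin 3) : (torusCordalis m 3).degree v = 4 := by
  obtain ⟨x, hx, rfl⟩ := f_surj v
  unfold SimpleGraph.degree
  rw [neighborFinset_eq hm x]
  have h1 := f_ne_add (m := m) (x := x) (c := 1) (c' := 3) (by omega) (by omega) (by omega)
  have h2 := f_ne_add (m := m) (x := x) (c := 1) (c' := 3 * m - 1) (by omega) (by omega) (by omega)
  have h3 := f_ne_add (m := m) (x := x) (c := 1) (c' := 3 * m - 3) (by omega) (by omega) (by omega)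
  have h4 := f_ne_add (m := m) (x := x) (c := 3) (c' := 3 * m - 1) (by omega) (by omega) (by omega)
  have h5 := f_ne_add (m := m) (x := x) (c := 3) (c' := 3 * m - 3) (by omega) (by omega) (by omega)
  have h6 := f_ne_add (m := m) (x := x) (c := 3 * m - 1) (c' := 3 * m - 3) (by omega) (by omega) (by omega)
  rw [Finset.card_insert_of_notMem (by simp [h1, h2, h3]),
    Finset.card_insert_of_notMem (by simp [h4, h5]),
    Finset.card_insert_of_notMem (by simp [h6]), Finset.card_singleton]

def g (k : ℕ) : ℕ := 3 * k + (if k % 2 = 0 then 2 else 1)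

lemma g_lt {k : ℕ} : 3 * k + 1 ≤ g k ∧ g k ≤ 3 * k + 2 := by
  unfold g; split <;> omega

lemma g_inj : Function.Injective g := by
  intro a b h
  have ha := @g_lt a
  have hb := @g_lt b
  omega

def seedIdx (m : ℕ) : Finset ℕ := insert 0 ((Finset.range m).image g)

def seed (m : ℕ) [NeZero m] : Finset (ZMod m × Fin 3) := (seedIdx m).image (f m)

lemma mem_seedIdx {m x : ℕ} (hx : x < 3 * m) (h6 : x % 6 = 2 ∨ x % 6 = 4) :
    x ∈ seedIdx m := by
  refine Finset.mem_insert_of_mem (Finset.mem_image.mpr ⟨x / 3, Finset.mem_range.mpr (by omega), ?_⟩)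
  rcases h6 with h | h
  · have h2 : (x / 3) % 2 = 0 := by omega
    unfold g; rw [if_pos h2]; omega
  · have h2 : (x / 3) % 2 = 1 := by omega
    unfold g; rw [if_neg (by omega)]; omega

lemma seedIdx_spec {m x : ℕ} (hx : x ∈ seedIdx m) :
    x < 3 * m ∨ m = 0 := by
  rcases Finset.mem_insert.mp hx with h | h
  · subst h; omega
  · obtain ⟨k, hk, rfl⟩ := Finset.mem_image.mp h
    have := @g_lt k
    have := Finset.mem_range.mp hk
    left; omega

lemma seed_card (hm : 3 ≤ m) : (seed m).card = m + 1 := by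
  have h1 : (seedIdx m).card = m + 1 := by
    unfold seedIdx
    rw [Finset.card_insert_of_notMem, Finset.card_image_of_injective _ g_inj,
      Finset.card_range]
    intro h
    obtain ⟨k, _, hk⟩ := Finset.mem_image.mp h
    have := @g_lt k
    omega
  rw [seed, Finset.card_image_of_injOn, h1]
  intro a ha b hb hab
  exact f_inj_lt (by rcases seedIdx_spec ha with h | h <;> omega)
    (by rcases seedIdx_spec hb with h | h <;> omega) hab

def A (m : ℕ) [NeZero m] (x : ℕ) : Prop :=
  Activated (torusCordalis m 3) (fun _ => 3) (↑(seed m)) (f m x)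

lemma step3 {x a b c : ℕ} (hab : f m a ≠ f m b) (hac : f m a ≠ f m c) (hbc : f m b ≠ f m c)
    (h1 : (torusCordalis m 3).Adj (f m a) (f m x))
    (h2 : (torusCordalis m 3).Adj (f m b) (f m x))
    (h3 : (torusCordalis m 3).Adj (f m c) (f m x))
    (c1 : A m a) (c2 : A m b) (c3 : A m c) : A m x := by
  refine Activated.step {f m a, f m b, f m c} ?_ ?_ ?_
  · intro u hu
    rcases Finset.mem_insert.mp hu with h | h
    · subst h; exact h1
    rcases Finset.mem_insert.mp h with h | h
    · subst h; exact h2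
    · rw [Finset.mem_singleton] at h; subst h; exact h3
  · rw [Finset.card_insert_of_notMem (by simp [hab, hac]),
      Finset.card_insert_of_notMem (by simp [hbc]), Finset.card_singleton]
  · intro u hu
    rcases Finset.mem_insert.mp hu with h | h
    · subst h; exact c1
    rcases Finset.mem_insert.mp h with h | h
    · subst h; exact c2
    · rw [Finset.mem_singleton] at h; subst h; exact c3

lemma seed_act {x : ℕ} (hx : x < 3 * m) (h6 : x = 0 ∨ x % 6 = 2 ∨ x % 6 = 4) : A m x := by
  refine Activated.base (Finset.mem_coe.mpr (Finset.mem_image.mpr ⟨x, ?_, rfl⟩))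
  rcases h6 with h | h
  · subst h; exact Finset.mem_insert_self _ _
  · exact mem_seedIdx hx h

lemma seed_perc (hm : 3 ≤ m) : ∀ v, Activated (torusCordalis m 3) (fun _ => 3) (↑(seed m)) v := by
  have hN : 9 ≤ 3 * m := by omega
  -- A 1 and A 3
  have A1 : A m 1 := by
    refine step3 (f_ne (by omega) (by omega) (by omega)) (f_ne (by omega) (by omega) (by omega))
      (f_ne (by omega) (by omega) (by omega)) (adj_succ hm 0) ((adj_succ hm 1).symm)
      ((adj3 hm 1).symm) (seed_act (by omega) (by omega)) (seed_act (by omega) (by omega))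
      (seed_act (by omega) (by omega))
  have A3 : A m 3 := by
    refine step3 (f_ne (by omega) (by omega) (by omega)) (f_ne (by omega) (by omega) (by omega))
      (f_ne (by omega) (by omega) (by omega)) (adj3 hm 0) ((adj_succ hm 2))
      ((adj_succ hm 3).symm) (seed_act (by omega) (by omega)) (seed_act (by omega) (by omega))
      (seed_act (by omega) (by omega))
  -- generic x ≡ 5 (mod 6)
  have A5 : ∀ x : ℕ, x % 6 = 5 → x + 3 < 3 * m → A m x := by
    intro x h6 hx
    have h5 : 5 ≤ x := by omega
    have e1 := adj3 hm (x - 3); rw [show x - 3 + 3 = x from by omega] at e1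
    have e2 := adj_succ hm (x - 1); rw [show x - 1 + 1 = x from by omega] at e2
    refine step3 ?_ ?_ ?_ e1 e2 ((adj3 hm x).symm)
      (seed_act (by omega) (by omega)) (seed_act (by omega) (by omega))
      (seed_act (by omega) (by omega)) <;>
      [skip; skip; skip] <;>
      exact f_ne (by omega) (by omega) (by omega)
  -- generic x ≡ 1 (mod 6), x ≥ 5
  have Ag1 : ∀ x : ℕ, x % 6 = 1 → 5 ≤ x → x + 3 < 3 * m → A m x := by
    intro x h6 h5 hx
    have e1 := adj3 hm (x - 3); rw [show x - 3 + 3 = x from by omega] at e1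
    refine step3 ?_ ?_ ?_ e1 ((adj_succ hm x).symm) ((adj3 hm x).symm)
      (seed_act (by omega) (by omega)) (seed_act (by omega) (by omega))
      (seed_act (by omega) (by omega)) <;>
      exact f_ne (by omega) (by omega) (by omega)
  -- wrap case : N ≡ 3 (mod 6), x = N - 2
  have AN2 : 3 * m % 6 = 3 → A m (3 * m - 2) := by
    intro hN6
    have e1 := adj3 hm (3 * m - 5); rw [show 3 * m - 5 + 3 = 3 * m - 2 from by omega] at e1
    have e2 := adj_succ hm (3 * m - 2)
    have e3 := adj3 hm (3 * m - 2)
    rw [show 3 * m - 2 + 3 = 1 + 3 * m from by omega, f_period] at e3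
    refine step3 ?_ ?_ ?_ e1 e2.symm e3.symm
      (seed_act (by omega) (by omega)) (seed_act (by omega) (by omega)) A1 <;>
      exact f_ne (by omega) (by omega) (by omega)
  -- wrap case : N ≡ 0 (mod 6), x = N - 1
  have AN1 : 3 * m % 6 = 0 → A m (3 * m - 1) := by
    intro hN6
    have e1 := adj3 hm (3 * m - 4); rw [show 3 * m - 4 + 3 = 3 * m - 1 from by omega] at e1
    have e2 := adj_succ hm (3 * m - 2); rw [show 3 * m - 2 + 1 = 3 * m - 1 from by omega] at e2
    have e3 := adj3 hm (3 * m - 1)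
    rw [show 3 * m - 1 + 3 = 2 + 3 * m from by omega, f_period] at e3
    refine step3 ?_ ?_ ?_ e1 e2 e3.symm
      (seed_act (by omega) (by omega)) (seed_act (by omega) (by omega))
      (seed_act (by omega) (by omega)) <;>
      exact f_ne (by omega) (by omega) (by omega)
  -- multiples of 3, by induction
  have Am3 : ∀ k : ℕ, 3 * k < 3 * m → A m (3 * k) := by
    intro k
    induction k with
    | zero => intro _; exact seed_act (by omega) (by omega)
    | succ k ih =>
      intro hk
      have hkm : 3 * k < 3 * m := by omega
      have e1 := adj3 hm (3 * k); rw [show 3 * k + 3 = 3 * (k + 1) from by omega] at e1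
      have e2 := adj_succ hm (3 * k + 2); rw [show 3 * k + 2 + 1 = 3 * (k + 1) from by omega] at e2
      have e3 := (adj_succ hm (3 * (k + 1))).symm
      have hne1 : f m (3 * k) ≠ f m (3 * k + 2) := f_ne (by omega) (by omega) (by omega)
      have hne2 : f m (3 * k) ≠ f m (3 * (k + 1) + 1) := f_ne (by omega) (by omega) (by omega)
      have hne3 : f m (3 * k + 2) ≠ f m (3 * (k + 1) + 1) := f_ne (by omega) (by omega) (by omega)
      have h36 : 3 * (k + 1) % 6 = 0 ∨ 3 * (k + 1) % 6 = 3 := by omega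
      rcases h36 with h0 | h3
      · -- 3k+2 ≡ 5, 3k+4 ≡ 1 (mod 6)
        have hb : A m (3 * k + 2) := A5 _ (by omega) (by omega)
        have hc : A m (3 * (k + 1) + 1) := by
          by_cases hcase : 3 * (k + 1) + 1 + 3 < 3 * m
          · exact Ag1 _ (by omega) (by omega) hcase
          · -- 3(k+1)+1 = 3m - 2 and N ≡ 3 mod 6 : but here N ≡ ? 
            have hx : 3 * (k + 1) + 1 = 3 * m - 2 := by omega
            rw [hx]; exact AN2 (by omega)
        exact step3 hne1 hne2 hne3 e1 e2 e3 (ih hkm) hb hc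
      · -- 3k+2 ≡ 2, 3k+4 ≡ 4 (mod 6) : seeds
        have hb : A m (3 * k + 2) := seed_act (by omega) (by omega)
        have hc : A m (3 * (k + 1) + 1) := seed_act (by omega) (by omega)
        exact step3 hne1 hne2 hne3 e1 e2 e3 (ih hkm) hb hc
  -- coverage
  intro v
  obtain ⟨x, hx, rfl⟩ := f_surj v
  have hN6 : 3 * m % 6 = 0 ∨ 3 * m % 6 = 3 := by omega
  have h6 : x % 6 = 0 ∨ x % 6 = 1 ∨ x % 6 = 2 ∨ x % 6 = 3 ∨ x % 6 = 4 ∨ x % 6 = 5 := by omega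
  rcases h6 with h | h | h | h | h | h
  · have := Am3 (x / 3) (by omega); rwa [show 3 * (x / 3) = x from by omega] at this
  · rcases Nat.eq_or_lt_of_le (show 1 ≤ x from by omega) with h1 | h1
    · rw [← h1]; exact A1
    · have h5 : 5 ≤ x := by omega
      by_cases hcase : x + 3 < 3 * m
      · exact Ag1 x h h5 hcase
      · have hx2 : x = 3 * m - 2 ∧ 3 * m % 6 = 3 := by omega
        rw [hx2.1]; exact AN2 hx2.2
  · exact seed_act hx (by omega)
  · have := Am3 (x / 3) (by omega); rwa [show 3 * (x / 3) = x from by omega] at this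
  · exact seed_act hx (by omega)
  · by_cases hcase : x + 3 < 3 * m
    · exact A5 x h hcase
    · have hx2 : x = 3 * m - 1 ∧ 3 * m % 6 = 0 := by omega
      rw [hx2.1]; exact AN1 hx2.2


section Lower

open scoped Classical

variable {W : Type*} [Fintype W] {G : SimpleGraph W} {S : Set W}

def Ait (G : SimpleGraph W) (S : Set W) : ℕ → Set W
  | 0 => S
  | n + 1 => Ait G S n ∪
      {v | ∃ T : Finset W, (∀ u ∈ T, G.Adj u v) ∧ 3 ≤ T.card ∧ ∀ u ∈ T, u ∈ Ait G S n}

lemma Ait_mono {n n' : ℕ} (h : n ≤ n') : Ait G S n ⊆ Ait G S n' := by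
  induction n' with
  | zero => rw [Nat.le_zero.mp h]
  | succ k ih =>
    rcases Nat.eq_or_lt_of_le h with h1 | h1
    · rw [h1]
    · exact (ih (by omega)).trans Set.subset_union_left

lemma activated_exists {v : W} (h : Activated G (fun _ => 3) S v) :
    ∃ n, v ∈ Ait G S n := by
  induction h with
  | base h => exact ⟨0, h⟩
  | step T hadj hcard hact ih =>
    have h2 : ∃ n, ∀ u ∈ T, u ∈ Ait G S n := by
      choose nf hnf using ih
      refine ⟨T.attach.sup fun u => nf u.1 u.2, fun u hu =>
        Ait_mono (Finset.le_sup (Finset.mem_attach _ ⟨u, hu⟩)) (hnf u hu)⟩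
    obtain ⟨n, hn⟩ := h2
    exact ⟨n + 1, Or.inr ⟨T, hadj, hcard, hn⟩⟩

lemma exists_rank (hperc : ∀ v, Activated G (fun _ => 3) S v) :
    ∃ r : W → ℕ, Function.Injective r ∧
      ∀ v, v ∉ S → ∃ T : Finset W, (∀ u ∈ T, G.Adj u v ∧ r u < r v) ∧ 3 ≤ T.card := by
  have hne : ∀ v, {n | v ∈ Ait G S n}.Nonempty := fun v => activated_exists (hperc v)
  set M := Fintype.card W + 1 with hM
  let e := Fintype.equivFin W
  let hgt : W → ℕ := fun v => sInf {n | v ∈ Ait G S n}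
  have heM : ∀ v, (e v : ℕ) < M := fun v => by have := (e v).isLt; omega
  refine ⟨fun v => hgt v * M + e v, ?_, ?_⟩
  · intro u v huv
    have h1 := heM u
    have h2 := heM v
    simp only [] at huv
    have hmod : (hgt u * M + (e u : ℕ)) % M = (hgt v * M + (e v : ℕ)) % M := by rw [huv]
    rw [add_comm (hgt u * M), add_comm (hgt v * M), Nat.add_mul_mod_self_right,
      Nat.add_mul_mod_self_right, Nat.mod_eq_of_lt h1, Nat.mod_eq_of_lt h2] at hmod
    have hmul : hgt u * M = hgt v * M := by omega
    have hgteq : hgt u = hgt v := Nat.eq_of_mul_eq_mul_right (by omega) hmul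
    exact e.injective (Fin.ext hmod)
  · intro v hv
    have hmem : v ∈ Ait G S (hgt v) := Nat.sInf_mem (hne v)
    have hpos : hgt v ≠ 0 := by
      intro h0
      rw [h0] at hmem
      exact hv hmem
    obtain ⟨k, hk⟩ := Nat.exists_eq_succ_of_ne_zero hpos
    have hklt : k < hgt v := by omega
    have hnotk : v ∉ Ait G S k := Nat.notMem_of_lt_sInf hklt
    rw [hk] at hmem
    rcases hmem with hmem | hmem
    · exact absurd (Ait_mono (by omega) hmem) hnotk
    · obtain ⟨T, hadj, hcard, hsub⟩ := hmem
      refine ⟨T, fun u hu => ⟨hadj u hu, ?_⟩, hcard⟩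
      have hu1 : hgt u ≤ k := Nat.sInf_le (hsub u hu)
      have hu2 : hgt u < hgt v := by omega
      have := heM u
      calc hgt u * M + (e u : ℕ) < (hgt u + 1) * M := by ring_nf; omega
        _ ≤ hgt v * M := Nat.mul_le_mul_right M (by omega)
        _ ≤ hgt v * M + (e v : ℕ) := by omega

lemma lower_bound [DecidableEq W] (hdeg : ∀ v, G.degree v = 4) (S : Finset W)
    (hperc : ∀ v, Activated G (fun _ => 3) (↑S) v) (hv0 : ∃ v, v ∉ S) :
    2 * Fintype.card W + 1 ≤ 6 * S.card := by
  obtain ⟨r, hrinj, hrT⟩ := exists_rank hperc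
  set C : Finset W := Sᶜ with hC
  have hCne : C.Nonempty := by
    obtain ⟨v, hv⟩ := hv0
    exact ⟨v, Finset.mem_compl.mpr hv⟩
  set B : W → Finset W := fun v => (G.neighborFinset v).filter (fun u => r u < r v) with hB
  set F : W → Finset W := fun v => (G.neighborFinset v).filter (fun u => r v < r u) with hF
  have hBF : ∀ v, (B v).card + (F v).card = 4 := by
    intro v
    have hdisj : Disjoint (B v) (F v) := by
      rw [Finset.disjoint_left]
      intro u hu1 hu2
      rw [hB, Finset.mem_filter] at hu1
      rw [hF, Finset.mem_filter] at hu2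
      omega
    have hunion : B v ∪ F v = G.neighborFinset v := by
      rw [hB, hF, ← Finset.filter_or]
      apply Finset.filter_true_of_mem
      intro u hu
      rw [SimpleGraph.mem_neighborFinset] at hu
      have hne : u ≠ v := (G.ne_of_adj hu).symm
      have : r u ≠ r v := fun h => hne (hrinj h)
      omega
    rw [← Finset.card_union_of_disjoint hdisj, hunion, ← SimpleGraph.degree, hdeg]
  have hB3 : ∀ v ∈ C, 3 ≤ (B v).card := by
    intro v hv
    obtain ⟨T, hT, hTc⟩ := hrT v (by simpa [hC, Finset.mem_compl] using hv)
    refine hTc.trans (Finset.card_le_card ?_)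
    intro u hu
    rw [hB, Finset.mem_filter, SimpleGraph.mem_neighborFinset]
    exact ⟨((hT u hu).1).symm, (hT u hu).2⟩
  -- the edge set among C
  set E : Finset (W × W) := (C ×ˢ C).filter (fun p => G.Adj p.1 p.2 ∧ r p.1 < r p.2) with hE
  have claim1 : ∑ v ∈ C, ((B v).filter (· ∈ C)).card = E.card := by
    rw [Finset.card_eq_sum_card_fiberwise (f := Prod.snd) (t := C)
      (fun p hp => (Finset.mem_product.mp (Finset.mem_filter.mp hp).1).2)]
    refine Finset.sum_congr rfl fun v hv => ?_
    refine Finset.card_bij (fun u _ => (u, v)) ?_ ?_ ?_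
    · intro a ha
      simp only [hB, Finset.mem_filter, SimpleGraph.mem_neighborFinset,
        Finset.mem_product] at ha ⊢
      exact ⟨⟨⟨ha.2, hv⟩, ha.1.1.symm, ha.1.2⟩, trivial⟩
    · intro a1 h1 a2 h2 h
      exact congrArg Prod.fst h
    · intro p hp
      simp only [Finset.mem_filter, Finset.mem_product] at hp
      obtain ⟨⟨⟨h1C, h2C⟩, hadj, hlt⟩, h2v⟩ := hp
      refine ⟨p.1, ?_, ?_⟩
      · simp only [hB, Finset.mem_filter, SimpleGraph.mem_neighborFinset]
        rw [h2v] at hadj hlt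
        exact ⟨⟨hadj.symm, hlt⟩, h1C⟩
      · exact Prod.ext rfl h2v.symm
  have claim2 : ∑ v ∈ C, ((F v).filter (· ∈ C)).card = E.card := by
    rw [Finset.card_eq_sum_card_fiberwise (f := Prod.fst) (t := C)
      (fun p hp => (Finset.mem_product.mp (Finset.mem_filter.mp hp).1).1)]
    refine Finset.sum_congr rfl fun v hv => ?_
    refine Finset.card_bij (fun u _ => (v, u)) ?_ ?_ ?_
    · intro a ha
      simp only [hF, Finset.mem_filter, SimpleGraph.mem_neighborFinset,
        Finset.mem_product] at ha ⊢
      exact ⟨⟨⟨hv, ha.2⟩, ha.1.1, ha.1.2⟩, trivial⟩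
    · intro a1 h1 a2 h2 h
      exact congrArg Prod.snd h
    · intro p hp
      simp only [Finset.mem_filter, Finset.mem_product] at hp
      obtain ⟨⟨⟨h1C, h2C⟩, hadj, hlt⟩, h1v⟩ := hp
      refine ⟨p.2, ?_, ?_⟩
      · simp only [hF, Finset.mem_filter, SimpleGraph.mem_neighborFinset]
        rw [h1v] at hadj hlt
        exact ⟨⟨hadj, hlt⟩, h2C⟩
      · exact Prod.ext h1v.symm rfl
  -- upper bound for the F side
  obtain ⟨w, hwC, hwmax⟩ := C.exists_max_image r hCne
  have hFw : ((F w).filter (· ∈ C)).card = 0 := by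
    rw [Finset.card_eq_zero, Finset.filter_eq_empty_iff]
    intro u hu
    rw [hF, Finset.mem_filter] at hu
    intro huC
    exact absurd (hwmax u huC) (by omega)
  have hFsum : E.card ≤ C.card - 1 := by
    rw [← claim2, ← Finset.sum_erase (f := fun v => ((F v).filter (· ∈ C)).card) C hFw]
    calc ∑ v ∈ C.erase w, ((F v).filter (· ∈ C)).card
        ≤ ∑ v ∈ C.erase w, 1 := by
          refine Finset.sum_le_sum fun v hv => ?_
          have hvC : v ∈ C := Finset.mem_of_mem_erase hv
          have h1 := hBF v
          have h2 := hB3 v hvC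
          have h3 : (F v).card ≤ 1 := by omega
          exact (Finset.card_filter_le _ _).trans h3
      _ = C.card - 1 := by rw [Finset.sum_const, smul_eq_mul, mul_one,
          Finset.card_erase_of_mem hwC]
  -- lower bound for the B side
  have hBsplit : ∀ v ∈ C, 3 ≤ ((B v).filter (· ∈ C)).card + ((B v).filter (· ∈ S)).card := by
    intro v hv
    have hcov : B v ⊆ (B v).filter (· ∈ C) ∪ (B v).filter (· ∈ S) := by
      intro u hu
      by_cases h : u ∈ S
      · exact Finset.mem_union_right _ (Finset.mem_filter.mpr ⟨hu, h⟩)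
      · exact Finset.mem_union_left _ (Finset.mem_filter.mpr ⟨hu, Finset.mem_compl.mpr h⟩)
    have := (Finset.card_le_card hcov).trans (Finset.card_union_le _ _)
    have := hB3 v hv
    omega
  have hBsum : 3 * C.card ≤ E.card + ∑ v ∈ C, ((B v).filter (· ∈ S)).card := by
    rw [← claim1, ← Finset.sum_add_distrib]
    calc 3 * C.card = ∑ _v ∈ C, 3 := by rw [Finset.sum_const, smul_eq_mul, mul_comm]
      _ ≤ _ := Finset.sum_le_sum hBsplit
  -- seed side bounded by degrees
  have hSsum : ∑ v ∈ C, ((B v).filter (· ∈ S)).card ≤ 4 * S.card := by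
    have step1 : ∑ v ∈ C, ((B v).filter (· ∈ S)).card
        ≤ ∑ v ∈ Finset.univ, (S.filter (fun u => G.Adj v u)).card := by
      refine (Finset.sum_le_sum_of_subset (Finset.subset_univ C)).trans ?_
      refine Finset.sum_le_sum fun v _ => Finset.card_le_card ?_
      intro u hu
      rw [Finset.mem_filter, hB, Finset.mem_filter, SimpleGraph.mem_neighborFinset] at hu
      rw [Finset.mem_filter]
      exact ⟨hu.2, hu.1.1⟩
    refine step1.trans ?_
    have step2 : ∀ v, (S.filter (fun u => G.Adj v u)).card
        = ∑ u ∈ S, (if G.Adj v u then 1 else 0) := by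
      intro v; rw [Finset.card_filter]
    simp only [step2]
    rw [Finset.sum_comm]
    have step3 : ∀ u ∈ S, ∑ v ∈ Finset.univ, (if G.Adj v u then 1 else 0) = 4 := by
      intro u _
      rw [← Finset.card_filter]
      have : Finset.univ.filter (fun v => G.Adj v u) = G.neighborFinset u := by
        ext z
        rw [Finset.mem_filter, SimpleGraph.mem_neighborFinset]
        simp [SimpleGraph.adj_comm]
      rw [this, ← SimpleGraph.degree, hdeg]
    rw [Finset.sum_congr rfl step3, Finset.sum_const, smul_eq_mul, mul_comm]
  -- combine
  have hCcard : C.card + S.card = Fintype.card W := by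
    rw [hC, Finset.card_compl]
    have := Finset.card_le_univ S
    omega
  have hC1 : 1 ≤ C.card := Finset.card_pos.mpr hCne
  omega

end Lower

end TC

/-- For every `m ≥ 3`, `min-seed(C_m ⊘ C_3, 3) = m + 1`. -/
theorem minSeed_torusCordalis_three (m : ℕ) [NeZero m] (hm : 3 ≤ m) :
    minSeed (torusCordalis m 3) (fun _ => 3) = m + 1 := by
  classical
  have hcard : Fintype.card (ZMod m × Fin 3) = 3 * m := by
    rw [Fintype.card_prod, ZMod.card, Fintype.card_fin]; ring
  have hmem : (m + 1) ∈ {k | ∃ S : Finset (ZMod m × Fin 3), S.card = k ∧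
      ∀ v, Activated (torusCordalis m 3) (fun _ => 3) (↑S) v} :=
    ⟨TC.seed m, TC.seed_card hm, TC.seed_perc hm⟩
  refine le_antisymm (Nat.sInf_le hmem) (le_csInf ⟨_, hmem⟩ ?_)
  rintro k ⟨S, hSc, hSp⟩
  by_cases hfull : ∃ v, v ∉ S
  · have hlb := TC.lower_bound (G := torusCordalis m 3)
      (fun v => TC.degree_eq hm v) S hSp hfull
    rw [hcard] at hlb
    omega
  · push_neg at hfull
    have hS : S = Finset.univ := Finset.eq_univ_iff_forall.mpr hfull
    rw [hS, Finset.card_univ, hcard] at hSc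
    omega
end
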